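/- arXiv:2211.15945 — 11 statements merged into one kernel-verified Lean document; each statement's English description precedes it below -/
import Mathlib

section
/- Let S be a string and let p and q be positive integers that are both periods of S and satisfy p + q ≤ |S|. Then gcd(p, q) is also a period of S. -/
/-- A string of length `n` is modeled as a function `S : ℕ → α`, read at the
1-indexed positions `1, …, n`.  A positive integer `p ≤ n` is a *period* of `S`
if `S[i] = S[i+p]` holds for all `1 ≤ i ≤ n - p`. -/
def IsPeriod {α : Type*} (S : ℕ → α) (n p : ℕ) : Prop :=
  1 ≤ p ∧ p ≤ n ∧ ∀ i, 1 ≤ i → i + p ≤ n → S i = S (i + p)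

lemma sub_period {α : Type*} (S : ℕ → α) (n p q : ℕ)
    (hp : IsPeriod S n p) (hq : IsPeriod S n q) (hlt : p < q) (hpq : p + q ≤ n) :
    IsPeriod S n (q - p) := by
  obtain ⟨hp1, hpn, hpS⟩ := hp
  obtain ⟨hq1, hqn, hqS⟩ := hq
  refine ⟨by omega, by omega, fun i hi hin => ?_⟩
  by_cases h : i + q ≤ n
  · have e1 : S i = S (i + q) := hqS i hi h
    have e2 : S (i + (q - p)) = S (i + (q - p) + p) := hpS _ (by omega) (by omega)
    have : i + (q - p) + p = i + q := by omega
    rw [e1, e2, this]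
  · -- i + q > n, so i > p
    have hip : p < i := by omega
    have e1 : S (i - p) = S (i - p + p) := hpS (i - p) (by omega) (by omega)
    have e2 : S (i - p) = S (i - p + q) := hqS (i - p) (by omega) (by omega)
    have h1 : i - p + p = i := by omega
    have h2 : i - p + q = i + (q - p) := by omega
    rw [h1] at e1
    rw [h2] at e2
    rw [← e1, e2]

/-- **Weak Periodicity Lemma**: if a string `S` of length `n` has periods `p` and `q`
with `p + q ≤ n`, then `gcd(p, q)` is also a period of `S`. -/
theorem weak_periodicity_lemma {α : Type*} (S : ℕ → α) (n p q : ℕ)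
    (hp : IsPeriod S n p) (hq : IsPeriod S n q) (hpq : p + q ≤ n) :
    IsPeriod S n (Nat.gcd p q) := by
  have main : ∀ m a b, a + b = m → IsPeriod S n a → IsPeriod S n b → a + b ≤ n →
      IsPeriod S n (Nat.gcd a b) := by
    intro m
    induction m using Nat.strong_induction_on with
    | _ m ih =>
    intro a b hab hpa hqb habn
    have ha1 : 1 ≤ a := hpa.1
    have hb1 : 1 ≤ b := hqb.1
    rcases lt_trichotomy a b with h | h | h
    · have hs := sub_period S n a b hpa hqb h habn
      have hg : Nat.gcd a (b - a) = Nat.gcd a b := by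
        rw [Nat.gcd_sub_self_right h.le]
      rw [← hg]
      have h1 : a + (b - a) < m := by omega
      have h2 : a + (b - a) ≤ n := by omega
      exact ih (a + (b - a)) h1 a (b - a) rfl hpa hs h2
    · subst h
      simpa [Nat.gcd_self] using hpa
    · have hs := sub_period S n b a hqb hpa h (by omega)
      have hg : Nat.gcd (a - b) b = Nat.gcd a b := by
        rw [Nat.gcd_sub_self_left h.le]
      rw [← hg]
      have h1 : (a - b) + b < m := by omega
      have h2 : (a - b) + b ≤ n := by omega
      exact ih ((a - b) + b) h1 (a - b) b rfl hs hqb h2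
  exact main (p + q) p q rfl hp hq hpq
end

section
/- Let S and T be strings with 2|T|/3 ≤ |S| ≤ |T|, and let k_1 < k_2 < ⋯ < k_d be all positions at which S occurs in T (i.e., T[k_j .. k_j+|S|−1] = S for each j, and these are all such positions). Then k_1, k_2, …, k_d form an arithmetic progression (k_{j+1} − k_j is the same for all 1 ≤ j < d). Moreover, if d ≥ 2, then per(S) = k_2 − k_1. -/
/-- `per(S)`: the minimal period of the length-`n` string `S`. -/
noncomputable def minPer {α : Type*} (S : ℕ → α) (n : ℕ) : ℕ :=
  sInf {p | IsPeriod S n p}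

/-- The string `S` of length `m` occurs in the string `T` of length `n` at
(1-indexed) position `k`, i.e. `T[k .. k+m-1] = S`. -/
def OccursAt {α : Type*} (S : ℕ → α) (m : ℕ) (T : ℕ → α) (n k : ℕ) : Prop :=
  1 ≤ k ∧ k + m ≤ n + 1 ∧ ∀ t, 1 ≤ t → t ≤ m → T (k + t - 1) = S t

lemma period_iter {α : Type*} {S : ℕ → α} {m p : ℕ} (hp : IsPeriod S m p) :
    ∀ c i, 1 ≤ i → i + c * p ≤ m → S i = S (i + c * p) := by
  intro c
  induction c with
  | zero => intro i _ _; simp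
  | succ c ih =>
    intro i hi hle
    have key : i + (c + 1) * p = i + c * p + p := by ring
    rw [key] at hle ⊢
    have h1 : i + c * p ≤ m := by have := hp.1; omega
    rw [ih i hi h1]
    exact hp.2.2 _ (by omega) hle

lemma period_sub {α : Type*} {S : ℕ → α} {m p q : ℕ} (hp : IsPeriod S m p)
    (hq : IsPeriod S m q) (hpq : p < q) (hsum : p + q ≤ m) :
    IsPeriod S m (q - p) := by
  obtain ⟨hp1, hpm, hpf⟩ := hp
  obtain ⟨hq1, hqm, hqf⟩ := hq
  refine ⟨by omega, by omega, ?_⟩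
  intro i hi hle
  by_cases h : i + q ≤ m
  · have e1 : S i = S (i + q) := hqf i hi h
    have e2 : S (i + (q - p)) = S (i + (q - p) + p) := hpf _ (by omega) (by omega)
    have e3 : i + (q - p) + p = i + q := by omega
    rw [e1, e2, e3]
  · have hip : p + 1 ≤ i := by omega
    have e1 : S (i - p) = S (i - p + p) := hpf _ (by omega) (by omega)
    have e2 : S (i - p) = S (i - p + q) := hqf _ (by omega) (by omega)
    have e3 : i - p + p = i := by omega
    have e4 : i - p + q = i + (q - p) := by omega
    rw [e3] at e1
    rw [e4] at e2
    rw [← e1, e2]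

lemma fine_wilf_aux {α : Type*} (S : ℕ → α) (m : ℕ) :
    ∀ N p q, p + q ≤ N → IsPeriod S m p → IsPeriod S m q → p + q ≤ m →
      IsPeriod S m (Nat.gcd p q) := by
  intro N
  induction N with
  | zero => intro p q hN hp _ _; exact absurd hN (by have := hp.1; omega)
  | succ N ih =>
    intro p q hN hp hq hsum
    rcases lt_trichotomy p q with h | h | h
    · have hsub : IsPeriod S m (q - p) := period_sub hp hq h hsum
      have : Nat.gcd p (q - p) = Nat.gcd p q := by
        rw [Nat.gcd_comm p (q-p), Nat.gcd_sub_self_left (by omega), Nat.gcd_comm]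
      rw [← this]
      exact ih p (q - p) (by have := hp.1; omega) hp hsub (by omega)
    · subst h; rwa [Nat.gcd_self]
    · have hsub : IsPeriod S m (p - q) := period_sub hq hp h (by omega)
      have : Nat.gcd (p - q) q = Nat.gcd p q := by
        rw [Nat.gcd_comm (p-q), Nat.gcd_sub_self_right (by omega), Nat.gcd_comm]
      rw [← this]
      exact ih (p - q) q (by have := hq.1; omega) hsub hq (by omega)

lemma gap_eq {α : Type*} (S T : ℕ → α) (m n d : ℕ)
    (hm : 1 ≤ m) (hlen : 2 * n ≤ 3 * m) (hmn : m ≤ n)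
    (k : ℕ → ℕ)
    (hmono : ∀ j, 1 ≤ j → j < d → k j < k (j + 1))
    (hocc : ∀ pos, OccursAt S m T n pos ↔ ∃ j, 1 ≤ j ∧ j ≤ d ∧ k j = pos) :
    ∀ j, 1 ≤ j → j < d → k (j + 1) - k j = minPer S m := by
  -- monotonicity of k on [1, d]
  have kmono : ∀ b, b ≤ d → ∀ a, 1 ≤ a → a ≤ b → k a ≤ k b := by
    intro b
    induction b with
    | zero => intro _ a ha hab; omega
    | succ b ih =>
      intro hbd a ha hab
      rcases eq_or_lt_of_le hab with h | h
      · exact le_of_eq (by rw [h])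
      · exact le_trans (ih (by omega) a ha (by omega))
          (le_of_lt (hmono b (by omega) (by omega)))
  -- basic facts about the minimal period
  have hPm : IsPeriod S m m :=
    ⟨hm, le_refl m, fun i hi hle => absurd hle (by omega)⟩
  have hne0 : Set.Nonempty {p | IsPeriod S m p} := ⟨m, hPm⟩
  have hpper : IsPeriod S m (minPer S m) := Nat.sInf_mem hne0
  have hpmin : ∀ q, IsPeriod S m q → minPer S m ≤ q := fun q hq =>
    Nat.sInf_le (show q ∈ {p | IsPeriod S m p} from hq)
  set p := minPer S m with hpdef
  intro j hj hjd
  obtain ⟨ho11, ho12, ho13⟩ : OccursAt S m T n (k j) := (hocc (k j)).mpr ⟨j, hj, by omega, rfl⟩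
  obtain ⟨ho21, ho22, ho23⟩ : OccursAt S m T n (k (j + 1)) :=
    (hocc (k (j + 1))).mpr ⟨j + 1, by omega, by omega, rfl⟩
  have hkk : k j < k (j + 1) := hmono j hj hjd
  set g := k (j + 1) - k j with hgdef
  have hkg : k (j + 1) = k j + g := by omega
  have hg1 : 1 ≤ g := by omega
  have h2g : 2 * g ≤ m := by omega
  -- g is a period of S
  have hgper : IsPeriod S m g := by
    refine ⟨hg1, by omega, ?_⟩
    intro i hi hle
    have e1 : T (k (j + 1) + i - 1) = S i := ho23 i hi (by omega)
    have e2 : T (k j + (i + g) - 1) = S (i + g) := ho13 (i + g) (by omega) hle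
    have e3 : k (j + 1) + i - 1 = k j + (i + g) - 1 := by omega
    rw [e3] at e1
    exact e1.symm.trans e2
  have hpg : p ≤ g := hpmin g hgper
  have hp1 : 1 ≤ p := hpper.1
  -- p divides g (Fine–Wilf)
  have hdvd : p ∣ g := by
    have hgcd : IsPeriod S m (Nat.gcd p g) :=
      fine_wilf_aux S m (p + g) p g le_rfl hpper hgper (by omega)
    have h1 : p ≤ Nat.gcd p g := hpmin _ hgcd
    have h2 : Nat.gcd p g ≤ p := Nat.le_of_dvd (by omega) (Nat.gcd_dvd_left p g)
    have h3 : Nat.gcd p g = p := le_antisymm h2 h1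
    rw [← h3]
    exact Nat.gcd_dvd_right p g
  -- suppose p < g; then S also occurs at k j + p, a contradiction
  by_contra hne
  have hplt : p < g := by omega
  have hocc3 : OccursAt S m T n (k j + p) := by
    refine ⟨by omega, by omega, ?_⟩
    intro t ht htm
    by_cases hcase : t + p ≤ m
    · have e1 : T (k j + (t + p) - 1) = S (t + p) := ho13 (t + p) (by omega) hcase
      have e2 : S t = S (t + p) := hpper.2.2 t ht hcase
      have e3 : k j + p + t - 1 = k j + (t + p) - 1 := by omega
      rw [e3, e1, ← e2]
    · obtain ⟨c, hc⟩ := hdvd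
      have hcp : (c - 1) * p = g - p := by
        have h1 : (c - 1) * p = c * p - 1 * p := by rw [Nat.sub_mul]
        have h2 : c * p = g := by rw [hc]; ring
        omega
      have ht'1 : 1 ≤ t + p - g := by omega
      have e1 : T (k (j + 1) + (t + p - g) - 1) = S (t + p - g) :=
        ho23 _ ht'1 (by omega)
      have e2 : k j + p + t - 1 = k (j + 1) + (t + p - g) - 1 := by omega
      have e3 : S (t + p - g) = S (t + p - g + (c - 1) * p) :=
        period_iter hpper (c - 1) _ ht'1 (by rw [hcp]; omega)
      have e4 : t + p - g + (c - 1) * p = t := by rw [hcp]; omega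
      rw [e2, e1, e3, e4]
  obtain ⟨i, hi1, hid, hki⟩ := (hocc _).mp hocc3
  have hlow : k j < k i := by omega
  have hhigh : k i < k (j + 1) := by omega
  rcases le_or_gt i j with h | h
  · have := kmono j (by omega) i hi1 h
    omega
  · have := kmono i hid (j + 1) (by omega) h
    omega

/-- **Structure of substring occurrences.** Let `S`, `T` be strings with
`2|T|/3 ≤ |S| ≤ |T|`, and let `k 1 < k 2 < ⋯ < k d` be all the positions at which
`S` occurs in `T`.  Then the `k j` form an arithmetic progression; moreover, if
`d ≥ 2`, then `per(S) = k 2 - k 1`. -/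
theorem occurrences_form_arithmetic_progression {α : Type*} (S T : ℕ → α) (m n d : ℕ)
    (hm : 1 ≤ m) (hlen : 2 * n ≤ 3 * m) (hmn : m ≤ n)
    (k : ℕ → ℕ)
    (hmono : ∀ j, 1 ≤ j → j < d → k j < k (j + 1))
    (hocc : ∀ pos, OccursAt S m T n pos ↔ ∃ j, 1 ≤ j ∧ j ≤ d ∧ k j = pos) :
    (∀ j₁ j₂, 1 ≤ j₁ → j₁ < d → 1 ≤ j₂ → j₂ < d →
        k (j₁ + 1) - k j₁ = k (j₂ + 1) - k j₂) ∧
      (2 ≤ d → minPer S m = k 2 - k 1) := by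
  have gap := gap_eq S T m n d hm hlen hmn k hmono hocc
  constructor
  · intro j₁ j₂ h₁ h₁d h₂ h₂d
    rw [gap j₁ h₁ h₁d, gap j₂ h₂ h₂d]
  · intro hd
    have := gap 1 le_rfl (by omega)
    norm_num at this
    omega
end

section
/- Let T be a string of length n, let τ be a positive integer, and let Q = {i ∈ [1 .. n−τ+1] : per(T[i .. i+τ−1]) ≤ τ/3}. Suppose an interval [l .. r] ⊆ [1 .. n−τ+1] has length r − l + 1 ≤ τ/3. Then [l .. r] ∩ Q is either empty or an interval of consecutive integers, namely: if j and k are respectively the minimum and maximum elements of [l .. r] ∩ Q, then [j .. k] ⊆ Q. -/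
/-- `T` has period `p` on the positions `[a, b]`. -/
def PerOn {α : Type*} (T : ℕ → α) (a b p : ℕ) : Prop :=
  ∀ u, a ≤ u → u + p ≤ b → T u = T (u + p)

lemma perOn_mono {α : Type*} {T : ℕ → α} {a a' b b' p : ℕ}
    (h : PerOn T a b p) (ha : a ≤ a') (hb : b' ≤ b) : PerOn T a' b' p :=
  fun u hu hub => h u (ha.trans hu) (hub.trans hb)

/-- Extend a period `g` from a suffix `[c,b]` to `[a,b]`, stepping forward by `q`. -/
lemma extendFwd {α : Type*} {T : ℕ → α} {a b c q g : ℕ} (hq : 1 ≤ q)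
    (hcb : c + q + g ≤ b + 1)
    (hq_per : PerOn T a b q) (hg_suf : PerOn T c b g) : PerOn T a b g := by
  have key : ∀ m u, c ≤ u + m * q → a ≤ u → u + g ≤ b → T u = T (u + g) := by
    intro m
    induction m with
    | zero => intro u h1 h2 h3; exact hg_suf u (by omega) h3
    | succ m ih =>
      intro u h1 h2 h3
      by_cases hc : c ≤ u
      · exact hg_suf u hc h3
      · have hub' : u + q + g ≤ b := by omega
        have e1 : T u = T (u + q) := hq_per u h2 (by omega)
        have e2 : T (u + g) = T (u + g + q) := hq_per (u + g) (by omega) (by omega)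
        have h1' : c ≤ u + q + m * q := by
          have : (m + 1) * q = m * q + q := by ring
          omega
        have e3 : T (u + q) = T (u + q + g) := ih (u + q) h1' (by omega) (by omega)
        have : u + q + g = u + g + q := by omega
        rw [e1, e3, this, ← e2]
  intro u hu hub
  have hcq : c ≤ c * q := Nat.le_mul_of_pos_right c (by omega)
  exact key c u (by omega) hu hub

/-- Extend a period `g` from a prefix `[a,c]` to `[a,b]`, stepping back by `q`. -/
lemma extendBack {α : Type*} {T : ℕ → α} {a b c q g : ℕ} (hq : 1 ≤ q)
    (hc : a + q + g ≤ c + 1)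
    (hq_per : PerOn T a b q) (hg_pre : PerOn T a c g) : PerOn T a b g := by
  have key : ∀ m u, a ≤ u → u + g ≤ b → u + g ≤ c + m * q → T u = T (u + g) := by
    intro m
    induction m with
    | zero => intro u h1 h2 h3; exact hg_pre u h1 (by omega)
    | succ m ih =>
      intro u h1 h2 h3
      by_cases hcc : u + g ≤ c
      · exact hg_pre u h1 hcc
      · have huq : a + q ≤ u := by omega
        obtain ⟨v, rfl⟩ : ∃ v, u = v + q := ⟨u - q, by omega⟩
        have e1 : T v = T (v + q) := hq_per v (by omega) (by omega)
        have e2 : T (v + g) = T (v + g + q) := hq_per (v + g) (by omega) (by omega)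
        have h3' : v + g ≤ c + m * q := by
          have : (m + 1) * q = m * q + q := by ring
          omega
        have e3 : T v = T (v + g) := ih v (by omega) (by omega) h3'
        have : v + g + q = v + q + g := by omega
        rw [← e1, e3, e2, this]
  intro u hu hub
  have hbq : b ≤ b * q := Nat.le_mul_of_pos_right b (by omega)
  exact key b u hu hub (by omega)

/-- Fine–Wilf (weak version): two periods `p, q` on an interval of length ≥ `p + q`
force the period `gcd p q`. -/
lemma fineWilf {α : Type*} (T : ℕ → α) :
    ∀ s p q a b, p + q ≤ s → 1 ≤ p → 1 ≤ q → a + p + q ≤ b + 1 →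
      PerOn T a b p → PerOn T a b q → PerOn T a b (Nat.gcd p q) := by
  intro s
  induction s with
  | zero => intro p q a b hs hp hq; omega
  | succ s ih =>
    intro p q a b hs hp hq hab hP hQ
    rcases lt_trichotomy p q with h | h | h
    · -- p < q : q = p + d
      obtain ⟨d, rfl⟩ : ∃ d, q = p + d := ⟨q - p, by omega⟩
      have hd1 : 1 ≤ d := by omega
      obtain ⟨b', rfl⟩ : ∃ b', b = b' + p := ⟨b - p, by omega⟩
      have hdper : PerOn T a b' d := by
        intro u hu hud
        have e1 : T u = T (u + (p + d)) := hQ u hu (by omega)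
        have e2 : T (u + d) = T (u + d + p) := hP (u + d) (by omega) (by omega)
        have : u + (p + d) = u + d + p := by omega
        rw [e1, this, ← e2]
      have hpper : PerOn T a b' p := perOn_mono hP le_rfl (by omega)
      have hres : PerOn T a b' (Nat.gcd p d) :=
        ih p d a b' (by omega) hp hd1 (by omega) hpper hdper
      have hgd : Nat.gcd p d ∣ d := Nat.gcd_dvd_right p d
      have hgdle : Nat.gcd p d ≤ d := Nat.le_of_dvd hd1 hgd
      have : PerOn T a (b' + p) (Nat.gcd p d) :=
        extendBack hp (by omega) hP hres
      have hgcd : Nat.gcd p (p + d) = Nat.gcd p d := by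
        rw [show p + d = d + p from by omega, Nat.gcd_add_self_right]
      rwa [hgcd]
    · subst h
      rw [Nat.gcd_self]; exact hP
    · -- q < p : p = q + d
      obtain ⟨d, rfl⟩ : ∃ d, p = q + d := ⟨p - q, by omega⟩
      have hd1 : 1 ≤ d := by omega
      obtain ⟨b', rfl⟩ : ∃ b', b = b' + q := ⟨b - q, by omega⟩
      have hdper : PerOn T a b' d := by
        intro u hu hud
        have e1 : T u = T (u + (q + d)) := hP u hu (by omega)
        have e2 : T (u + d) = T (u + d + q) := hQ (u + d) (by omega) (by omega)
        have : u + (q + d) = u + d + q := by omega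
        rw [e1, this, ← e2]
      have hqper : PerOn T a b' q := perOn_mono hQ le_rfl (by omega)
      have hres : PerOn T a b' (Nat.gcd d q) :=
        ih d q a b' (by omega) hd1 hq (by omega) hdper hqper
      have hgdle : Nat.gcd d q ≤ d := Nat.le_of_dvd hd1 (Nat.gcd_dvd_left d q)
      have : PerOn T a (b' + q) (Nat.gcd d q) :=
        extendBack hq (by omega) hQ hres
      have hgcd : Nat.gcd (q + d) q = Nat.gcd d q := Nat.gcd_self_add_left q d
      rwa [hgcd]

lemma perOn_of_isPeriod {α : Type*} {T : ℕ → α} {τ i p : ℕ} (hi : 1 ≤ i)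
    (h : IsPeriod (fun t => T (i + t - 1)) τ p) : PerOn T i (i + τ - 1) p := by
  intro u hu hub
  have hp1 : 1 ≤ p := h.1
  have := h.2.2 (u + 1 - i) (by omega) (by omega)
  simp only at this
  have h1 : i + (u + 1 - i) - 1 = u := by omega
  have h2 : i + (u + 1 - i + p) - 1 = u + p := by omega
  rwa [h1, h2] at this

lemma isPeriod_of_perOn {α : Type*} {T : ℕ → α} {τ i p : ℕ} (hi : 1 ≤ i)
    (hp : 1 ≤ p) (hpτ : p ≤ τ) (h : PerOn T i (i + τ - 1) p) :
    IsPeriod (fun t => T (i + t - 1)) τ p := by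
  refine ⟨hp, hpτ, fun t ht htp => ?_⟩
  have := h (i + t - 1) (by omega) (by omega)
  simp only
  have h1 : i + t - 1 + p = i + (t + p) - 1 := by omega
  rwa [h1] at this

lemma isPeriod_self {α : Type*} (S : ℕ → α) {τ : ℕ} (hτ : 1 ≤ τ) :
    IsPeriod S τ τ :=
  ⟨hτ, le_rfl, fun i h1 h2 => by omega⟩


/-- **Structure of the highly-periodic set `Q`.** If the interval `[l .. r] ⊆ [1 .. n-τ+1]`
has length `r - l + 1 ≤ τ/3`, then `[l .. r] ∩ Q` is either empty or an interval of
consecutive integers: any integer lying between two elements of `[l .. r] ∩ Q` is in `Q`. -/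
theorem Q_intersection_is_interval {α : Type*} (T : ℕ → α) (n τ : ℕ) (hτ : 1 ≤ τ)
    (Q : Set ℕ)
    (hQ : Q = {i | 1 ≤ i ∧ i + τ ≤ n + 1 ∧
      minPer (fun t => T (i + t - 1)) τ ≤ τ / 3})
    (l r : ℕ) (hl : 1 ≤ l) (hlr : l ≤ r) (hr : r + τ ≤ n + 1)
    (hlen : r - l + 1 ≤ τ / 3) :
    ∀ j ∈ Q ∩ Set.Icc l r, ∀ k ∈ Q ∩ Set.Icc l r, ∀ x, j ≤ x → x ≤ k → x ∈ Q := by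
  subst hQ
  rintro j ⟨hjQ, hjl, hjr⟩ k ⟨hkQ, hkl, hkr⟩ x hjx hxk
  simp only [Set.mem_setOf_eq] at hjQ hkQ ⊢
  obtain ⟨hj1, hjn, hjper⟩ := hjQ
  obtain ⟨hk1, hkn, hkper⟩ := hkQ
  -- minimal periods of the windows at j and k
  set p := minPer (fun t => T (j + t - 1)) τ with hp_def
  set q := minPer (fun t => T (k + t - 1)) τ with hq_def
  have hpmem : IsPeriod (fun t => T (j + t - 1)) τ p :=
    Nat.sInf_mem (s := {p | IsPeriod (fun t => T (j + t - 1)) τ p})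
      ⟨τ, isPeriod_self (fun t => T (j + t - 1)) hτ⟩
  have hqmem : IsPeriod (fun t => T (k + t - 1)) τ q :=
    Nat.sInf_mem (s := {p | IsPeriod (fun t => T (k + t - 1)) τ p})
      ⟨τ, isPeriod_self (fun t => T (k + t - 1)) hτ⟩
  have hp1 : 1 ≤ p := hpmem.1
  have hq1 : 1 ≤ q := hqmem.1
  have hτ3 : 3 ≤ τ := by omega
  have hPj : PerOn T j (j + τ - 1) p := perOn_of_isPeriod (by omega) hpmem
  have hQk : PerOn T k (k + τ - 1) q := perOn_of_isPeriod (by omega) hqmem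
  -- Fine–Wilf on the overlap [k, j+τ-1]
  set g := Nat.gcd p q with hg_def
  have hgp : g ≤ p := Nat.le_of_dvd hp1 (Nat.gcd_dvd_left p q)
  have hgq : g ≤ q := Nat.le_of_dvd hq1 (Nat.gcd_dvd_right p q)
  have hg1 : 1 ≤ g := Nat.gcd_pos_of_pos_left q hp1
  have hOp : PerOn T k (j + τ - 1) p := perOn_mono hPj (hjx.trans hxk) le_rfl
  have hOq : PerOn T k (j + τ - 1) q := perOn_mono hQk le_rfl (by omega)
  have hfw : PerOn T k (j + τ - 1) g :=
    fineWilf T (p + q) p q k (j + τ - 1) le_rfl hp1 hq1 (by omega) hOp hOq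
  -- period g on the left window, the right window, hence the whole stretch
  have hA : PerOn T j (j + τ - 1) g := extendFwd hp1 (by omega) hPj hfw
  have hB : PerOn T k (k + τ - 1) g := extendBack hq1 (by omega) hQk hfw
  have hAll : PerOn T j (k + τ - 1) g := by
    intro u hu hub
    by_cases hcase : u + g ≤ j + τ - 1
    · exact hA u hu hcase
    · exact hB u (by omega) hub
  have hx : PerOn T x (x + τ - 1) g := perOn_mono hAll hjx (by omega)
  have hxIsP : IsPeriod (fun t => T (x + t - 1)) τ g :=
    isPeriod_of_perOn (by omega) hg1 (by omega) hx
  exact ⟨by omega, by omega, le_trans (Nat.sInf_le hxIsP) (by omega)⟩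
end

section
/- Let S be a string of length n and let w be a positive integer with 2^w > n. Then there exist an offset δ ∈ [0 .. ⌊n/2⌋] and checkpoints i_1, i_2, …, i_w with i_j − δ ∈ [1 .. n] for every j ∈ [1 .. w], such that: for every offset δ' ∈ [0 .. ⌊n/2⌋] for which δ' − δ is not an integer multiple of per(S), there exists a checkpoint i_j with i_j − δ' ∈ [1 .. n] and S[i_j − δ'] ≠ S[i_j − δ]. -/
/-- `q` is a period of `S` on the window of positions `[a, b]`. -/
def LPer {α : Type*} (S : ℕ → α) (a b q : ℕ) : Prop :=
  ∀ j, a ≤ j → j + q ≤ b → S j = S (j + q)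

/-- Iterating a period. -/
lemma steps_lemma {α : Type*} {S : ℕ → α} {n p : ℕ} (hp : IsPeriod S n p) :
    ∀ (t j : ℕ), 1 ≤ j → j + p * t ≤ n → S j = S (j + p * t) := by
  intro t
  induction t with
  | zero => intro j _ _; simp
  | succ t ih =>
    intro j h1 h2
    have hmul : p * (t + 1) = p * t + p := Nat.mul_succ p t
    have hple : p ≤ p * (t + 1) := Nat.le_mul_of_pos_right p (Nat.succ_pos t)
    have s1 : S j = S (j + p) := hp.2.2 j h1 (by omega)
    have s2 : S (j + p) = S (j + p + p * t) := ih (j + p) (by omega) (by omega)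
    have e : j + p + p * t = j + p * (t + 1) := by omega
    rw [s1, s2, e]

/-- Weak Fine–Wilf on a window: two periods `p, q` with `p + q` at most the
window length force `gcd p q` to be a period of the window. -/
lemma fine_wilf {α : Type*} (S : ℕ → α) :
    ∀ (fuel p q a b : ℕ), 1 ≤ p → 1 ≤ q → p + q ≤ fuel → a + p + q ≤ b + 1 →
      LPer S a b p → LPer S a b q → LPer S a b (Nat.gcd p q) := by
  intro fuel
  induction fuel with
  | zero => intro p q a b hp hq hf _ _ _; omega
  | succ f ih =>
    intro p q a b hp hq hf hlen hP hQ
    rcases lt_trichotomy p q with h | h | h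
    · have hsub : LPer S a b (q - p) := by
        intro j hj hjb
        by_cases hcase : j + q ≤ b
        · have e1 : S j = S (j + q) := hQ j hj hcase
          have e2 : S (j + (q - p)) = S (j + (q - p) + p) := hP (j + (q - p)) (by omega) (by omega)
          have e3 : j + (q - p) + p = j + q := by omega
          rw [e2, e3, ← e1]
        · have h1 : S (j - p) = S (j - p + p) := hP (j - p) (by omega) (by omega)
          have h2 : S (j - p) = S (j - p + q) := hQ (j - p) (by omega) (by omega)
          have e1 : j - p + p = j := by omega
          have e2 : j - p + q = j + (q - p) := by omega
          rw [e1] at h1; rw [e2] at h2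
          rw [← h1, h2]
      have := ih p (q - p) a b hp (by omega) (by omega) (by omega) hP hsub
      rwa [Nat.gcd_sub_self_right (le_of_lt h)] at this
    · subst h
      rwa [Nat.gcd_self]
    · have hsub : LPer S a b (p - q) := by
        intro j hj hjb
        by_cases hcase : j + p ≤ b
        · have e1 : S j = S (j + p) := hP j hj hcase
          have e2 : S (j + (p - q)) = S (j + (p - q) + q) := hQ (j + (p - q)) (by omega) (by omega)
          have e3 : j + (p - q) + q = j + p := by omega
          rw [e2, e3, ← e1]
        · have h1 : S (j - q) = S (j - q + q) := hQ (j - q) (by omega) (by omega)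
          have h2 : S (j - q) = S (j - q + p) := hP (j - q) (by omega) (by omega)
          have e1 : j - q + q = j := by omega
          have e2 : j - q + p = j + (p - q) := by omega
          rw [e1] at h1; rw [e2] at h2
          rw [← h1, h2]
      have := ih q (p - q) a b hq (by omega) (by omega) (by omega) hQ hsub
      rw [Nat.gcd_sub_self_right (le_of_lt h)] at this
      rwa [Nat.gcd_comm] at this
    
/-- Extension lemma: a period `g` of a window of length at least `p + g`
(where `p` is a global period) extends to a global period. -/
lemma ext_lemma {α : Type*} {S : ℕ → α} {n p g a b : ℕ} (hp : IsPeriod S n p)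
    (hg1 : 1 ≤ g) (ha : 1 ≤ a) (hb : b ≤ n) (hlen : a + p + g ≤ b + 1)
    (hL : LPer S a b g) : IsPeriod S n g := by
  obtain ⟨hp1, hpn, hper⟩ := hp
  have right : ∀ j, a ≤ j → j + g ≤ n → S j = S (j + g) := by
    intro j
    induction j using Nat.strong_induction_on with
    | _ j ih =>
      intro haj hjn
      by_cases hcase : j + g ≤ b
      · exact hL j haj hcase
      · have h1 : a ≤ j - p := by omega
        have hjp : j - p < j := by omega
        have e1 : S (j - p) = S (j - p + p) := hper (j - p) (by omega) (by omega)
        have e2 : S (j + g - p) = S (j + g - p + p) := hper (j + g - p) (by omega) (by omega)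
        have e3 : S (j - p) = S (j - p + g) := ih (j - p) hjp h1 (by omega)
        have q1 : j - p + p = j := by omega
        have q2 : j + g - p + p = j + g := by omega
        have q3 : j - p + g = j + g - p := by omega
        rw [q1] at e1; rw [q2] at e2; rw [q3] at e3
        rw [← e1, e3, e2]
  have main : ∀ t j, 1 ≤ j → j + g ≤ n → a ≤ j + p * t → S j = S (j + g) := by
    intro t
    induction t with
    | zero => intro j h1 h2 h3; exact right j (by omega) h2
    | succ t ih =>
      intro j h1 h2 h3
      by_cases hja : a ≤ j
      · exact right j hja h2
      · have s1 : S j = S (j + p) := hper j h1 (by omega)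
        have s2 : S (j + g) = S (j + g + p) := hper (j + g) (by omega) (by omega)
        have hmul : p * (t + 1) = p * t + p := Nat.mul_succ p t
        have s3 : S (j + p) = S (j + p + g) := ih (j + p) (by omega) (by omega) (by omega)
        have q1 : j + p + g = j + g + p := by omega
        rw [q1] at s3
        rw [s1, s3, ← s2]
  refine ⟨hg1, by omega, fun j hj hjn => ?_⟩
  have hpa : a ≤ p * a := Nat.le_mul_of_pos_left a hp1
  exact main a j hj hjn (by omega)

/-- In the highly periodic case (`p = per(S) ≤ n/2`), any two offsets
`m < M ≤ n/2` with `M - m < p` conflict at some position in the universal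
window `[n/2+1, n]`. -/
lemma key_per {α : Type*} {S : ℕ → α} {n p : ℕ} (hp : IsPeriod S n p)
    (hmin : ∀ q, IsPeriod S n q → p ≤ q) (hsmall : p ≤ n / 2) :
    ∀ m M, M ≤ n / 2 → m < M → M - m < p →
      ∃ i, (n / 2 + 1 ≤ i ∧ i ≤ n) ∧ M + 1 ≤ i ∧ i ≤ m + n ∧ S (i - M) ≠ S (i - m) := by
  intro m M hM hmM hDp
  by_contra hcon
  push_neg at hcon
  obtain ⟨hp1, hpn, hper⟩ := hp
  set D := M - m with hD
  set a := n / 2 + 1 - M with hadef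
  set b := n - m with hbdef
  have hLD : LPer S a b D := by
    intro j hj hjb
    have h := hcon (j + M) ⟨by omega, by omega⟩ (by omega) (by omega)
    have e1 : j + M - M = j := by omega
    have e2 : j + M - m = j + D := by omega
    rw [e1, e2] at h
    exact h
  have hLp : LPer S a b p := fun j hj hjb => hper j (by omega) (by omega)
  have hgcd : LPer S a b (Nat.gcd p D) :=
    fine_wilf S (p + D) p D a b hp1 (by omega) le_rfl (by omega) hLp hLD
  have hg1 : 1 ≤ Nat.gcd p D := Nat.gcd_pos_of_pos_left D (by omega)
  have hgD : Nat.gcd p D ≤ D := Nat.gcd_le_right (m := p) (n := D) (by omega)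
  have hgper : IsPeriod S n (Nat.gcd p D) :=
    ext_lemma ⟨hp1, hpn, hper⟩ hg1 (by omega) (by omega) (by omega) hgcd
  have := hmin _ hgper
  omega

/-- In the aperiodic case (`per(S) > n/2`), any two offsets `m < M ≤ n/2`
conflict at some position readable by both. -/
lemma key_ap {α : Type*} {S : ℕ → α} {n p : ℕ} (hp : IsPeriod S n p)
    (hmin : ∀ q, IsPeriod S n q → p ≤ q) (hbig : n / 2 < p) :
    ∀ m M, M ≤ n / 2 → m < M →
      ∃ i, M + 1 ≤ i ∧ i ≤ m + n ∧ S (i - M) ≠ S (i - m) := by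
  intro m M hM hmM
  by_contra hcon
  push_neg at hcon
  obtain ⟨hp1, hpn, hper⟩ := hp
  have hDper : IsPeriod S n (M - m) := by
    refine ⟨by omega, by omega, fun j hj hjn => ?_⟩
    have h := hcon (j + M) (by omega) (by omega)
    have e1 : j + M - M = j := by omega
    have e2 : j + M - m = j + (M - m) := by omega
    rw [e1, e2] at h
    exact h
  have := hmin _ hDper
  omega

/-- The halving recursion producing the deterministic sample. -/
lemma rec_lemma {α : Type*} (S : ℕ → α) (n : ℕ) (Q : ℕ → Prop) (C : ℕ → Prop)
    (oracle : ∀ m M, M ≤ n / 2 → m < M → C (M - m) →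
      ∃ i, Q i ∧ M + 1 ≤ i ∧ i ≤ m + n ∧ S (i - M) ≠ S (i - m)) :
    ∀ (k : ℕ) (A : Finset ℕ), (∀ x ∈ A, x ≤ n / 2) →
      (∀ a ∈ A, ∀ b ∈ A, a < b → C (b - a)) → A.Nonempty → A.card ≤ 2 ^ k →
      ∃ δ ∈ A, ∃ L : List ℕ, L.length ≤ k ∧ (∀ i ∈ L, Q i ∧ δ + 1 ≤ i ∧ i ≤ δ + n) ∧
        ∀ δ' ∈ A, δ' ≠ δ → ∃ i ∈ L, Q i ∧ δ' + 1 ≤ i ∧ i ≤ δ' + n ∧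
          S (i - δ') ≠ S (i - δ) := by
  intro k
  induction k with
  | zero =>
    intro A hA hC hne hcard
    obtain ⟨δ, hδ⟩ := hne
    refine ⟨δ, hδ, [], by simp, by simp, fun δ' h1 h2 => ?_⟩
    exact absurd (Finset.card_le_one.mp (by omega) δ' h1 δ hδ) h2
  | succ k ih =>
    intro A hA hC hne hcard
    classical
    set m := A.min' hne with hm
    set M := A.max' hne with hM
    by_cases hmM : M ≤ m
    · -- all elements equal
      refine ⟨m, A.min'_mem hne, [], by simp, by simp, fun δ' h1 h2 => ?_⟩
      have l1 := A.min'_le δ' h1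
      have l2 := A.le_max' δ' h1
      omega
    · push_neg at hmM
      obtain ⟨i₀, hQ0, hlo, hhi, hneq⟩ :=
        oracle m M (hA M (A.max'_mem hne)) hmM
          (hC m (A.min'_mem hne) M (A.max'_mem hne) hmM)
      set A₁ := A.filter (fun x => S (i₀ - x) = S (i₀ - m)) with hA₁
      set A₂ := A.filter (fun x => ¬ (S (i₀ - x) = S (i₀ - m))) with hA₂
      have hm1 : m ∈ A₁ := Finset.mem_filter.mpr ⟨A.min'_mem hne, rfl⟩
      have hM2 : M ∈ A₂ := Finset.mem_filter.mpr ⟨A.max'_mem hne, hneq⟩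
      have hsum : A₁.card + A₂.card = A.card :=
        Finset.card_filter_add_card_filter_not (p := fun x => S (i₀ - x) = S (i₀ - m))
      -- pick the smaller class
      have main : ∀ A' : Finset ℕ, (A' = A₁ ∨ A' = A₂) → A'.card ≤ 2 ^ k → A'.Nonempty →
          ∃ δ ∈ A, ∃ L : List ℕ, L.length ≤ k + 1 ∧
            (∀ i ∈ L, Q i ∧ δ + 1 ≤ i ∧ i ≤ δ + n) ∧
            ∀ δ' ∈ A, δ' ≠ δ → ∃ i ∈ L, Q i ∧ δ' + 1 ≤ i ∧ i ≤ δ' + n ∧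
              S (i - δ') ≠ S (i - δ) := by
        intro A' hA'or hcard' hne'
        have hsub : A' ⊆ A := by
          rcases hA'or with h | h <;> subst h <;> exact Finset.filter_subset _ _
        obtain ⟨δ, hδA', L, hlen, hbound, hkill⟩ :=
          ih A' (fun x hx => hA x (hsub hx)) (fun a ha b hb hab => hC a (hsub ha) b (hsub hb) hab)
            hne' hcard'
        have hδA : δ ∈ A := hsub hδA'
        have hδm : m ≤ δ := A.min'_le δ hδA
        have hδM : δ ≤ M := A.le_max' δ hδA
        refine ⟨δ, hδA, i₀ :: L, by simpa using hlen, ?_, ?_⟩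
        · intro i hi
          rcases List.mem_cons.mp hi with h | h
          · subst h; exact ⟨hQ0, by omega, by omega⟩
          · exact hbound i h
        · intro δ' hδ'A hδ'ne
          by_cases hin : δ' ∈ A'
          · obtain ⟨i, hiL, hrest⟩ := hkill δ' hin hδ'ne
            exact ⟨i, List.mem_cons_of_mem _ hiL, hrest⟩
          · have hδ'm : m ≤ δ' := A.min'_le δ' hδ'A
            have hδ'M : δ' ≤ M := A.le_max' δ' hδ'A
            have hchar : S (i₀ - δ') ≠ S (i₀ - δ) := by
              rcases hA'or with h | h
              · -- A' = A₁ : δ has char of m, δ' doesn't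
                have hδc : S (i₀ - δ) = S (i₀ - m) := by
                  have := hδA'; rw [h, hA₁, Finset.mem_filter] at this; exact this.2
                have hδ'c : ¬ (S (i₀ - δ') = S (i₀ - m)) := by
                  intro hcontra
                  exact hin (by rw [h, hA₁, Finset.mem_filter]; exact ⟨hδ'A, hcontra⟩)
                rw [hδc]; exact hδ'c
              · -- A' = A₂ : δ' has char of m, δ doesn't
                have hδc : ¬ (S (i₀ - δ) = S (i₀ - m)) := by
                  have := hδA'; rw [h, hA₂, Finset.mem_filter] at this; exact this.2
                have hδ'c : S (i₀ - δ') = S (i₀ - m) := by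
                  by_contra hcontra
                  exact hin (by rw [h, hA₂, Finset.mem_filter]; exact ⟨hδ'A, hcontra⟩)
                rw [hδ'c]; intro hcontra; exact hδc hcontra.symm
            exact ⟨i₀, List.mem_cons_self, hQ0, by omega, by omega, hchar⟩
      rcases le_or_gt A₁.card A₂.card with hle | hlt
      · exact main A₁ (Or.inl rfl) (by omega) ⟨m, hm1⟩
      · exact main A₂ (Or.inr rfl) (by omega) ⟨M, hM2⟩

/-- **Existence of a successful deterministic sample.** For any string `S` of length `n ≥ 1`
and any `w ≥ 1` with `2^w > n`, there exist an offset `δ ∈ [0 .. ⌊n/2⌋]` and checkpoints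
`i 1, …, i w` with `i j - δ ∈ [1 .. n]`, such that for every offset `δ' ∈ [0 .. ⌊n/2⌋]`
with `δ' - δ` not an integer multiple of `per(S)`, some checkpoint `i j` satisfies
`i j - δ' ∈ [1 .. n]` and `S[i j - δ'] ≠ S[i j - δ]`. -/
theorem deterministic_sample_exists {α : Type*} (S : ℕ → α) (n w : ℕ)
    (hn : 1 ≤ n) (hw : 1 ≤ w) (hpow : n < 2 ^ w) :
    ∃ (δ : ℕ) (i : ℕ → ℕ), δ ≤ n / 2 ∧
      (∀ j, 1 ≤ j → j ≤ w → δ + 1 ≤ i j ∧ i j ≤ δ + n) ∧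
      (∀ δ', δ' ≤ n / 2 → ¬ ((minPer S n : ℤ) ∣ ((δ' : ℤ) - (δ : ℤ))) →
        ∃ j, 1 ≤ j ∧ j ≤ w ∧ δ' + 1 ≤ i j ∧ i j ≤ δ' + n ∧
          S (i j - δ') ≠ S (i j - δ)) := by
  classical
  set p := minPer S n with hpdef
  have hnper : IsPeriod S n n := ⟨hn, le_refl n, fun i hi h2 => by omega⟩
  have hp : IsPeriod S n p := Nat.sInf_mem (⟨n, hnper⟩ : {q | IsPeriod S n q}.Nonempty)
  have hmin : ∀ q, IsPeriod S n q → p ≤ q := fun q hq => Nat.sInf_le hq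
  obtain ⟨hp1, hpn, hper⟩ := hp
  have hwpow : n / 2 + 1 ≤ 2 ^ (w - 1) := by
    have h2 : 2 ^ w = 2 ^ (w - 1) * 2 := by
      rw [← pow_succ]
      congr 1
      omega
    omega
  by_cases hple : p ≤ n / 2
  · -- periodic case: sample distinguishes residues mod p
    obtain ⟨δ, hδA, L, hlen, hbound, hkill⟩ :=
      rec_lemma S n (fun i => n / 2 + 1 ≤ i ∧ i ≤ n) (fun d => d < p)
        (fun m M hM hmM hC => key_per ⟨hp1, hpn, hper⟩ hmin hple m M hM hmM hC)
        (w - 1) (Finset.range p)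
        (fun x hx => by have := Finset.mem_range.mp hx; omega)
        (fun a ha b hb hab => by
          have := Finset.mem_range.mp hb; omega)
        ⟨0, Finset.mem_range.mpr (by omega)⟩
        (by rw [Finset.card_range]; omega)
    have hδp : δ < p := Finset.mem_range.mp hδA
    refine ⟨δ, fun j => L.getD (j - 1) (δ + 1), by omega, ?_, ?_⟩
    · intro j hj1 hjw
      show δ + 1 ≤ L.getD (j - 1) (δ + 1) ∧ L.getD (j - 1) (δ + 1) ≤ δ + n
      by_cases hcase : j - 1 < L.length
      · have hmem : L.getD (j - 1) (δ + 1) ∈ L := by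
          rw [List.getD_eq_getElem L _ hcase]
          exact List.getElem_mem hcase
        have := hbound _ hmem
        omega
      · rw [List.getD_eq_default L _ (by omega)]
        omega
    · intro δ' hδ' hnd
      set r := δ' % p with hrdef
      have hrp : r < p := Nat.mod_lt δ' (by omega)
      have hdm := Nat.div_add_mod δ' p
      have hrne : r ≠ δ := by
        intro hre
        apply hnd
        have h2 : p * (δ' / p) + δ = δ' := by omega
        refine ⟨(δ' / p : ℕ), ?_⟩
        have h3 := congrArg (Nat.cast : ℕ → ℤ) h2
        push_cast at h3
        omega
      obtain ⟨i₀, hi₀L, hQ, _, _, hneq⟩ :=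
        hkill r (Finset.mem_range.mpr hrp) hrne
      -- S (i₀ - δ') = S (i₀ - r) by periodicity
      have hstep : S (i₀ - δ') = S (i₀ - r) := by
        have h := steps_lemma ⟨hp1, hpn, hper⟩ (δ' / p) (i₀ - δ') (by omega) ?_
        · have e : i₀ - δ' + p * (δ' / p) = i₀ - r := by
            set c := p * (δ' / p) with hc
            omega
          rwa [e] at h
        · set c := p * (δ' / p) with hc
          omega
      obtain ⟨idx, hidx, hget⟩ := List.getElem_of_mem hi₀L
      refine ⟨idx + 1, by omega, by omega, ?_⟩
      show δ' + 1 ≤ L.getD (idx + 1 - 1) (δ + 1) ∧ L.getD (idx + 1 - 1) (δ + 1) ≤ δ' + n ∧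
        S (L.getD (idx + 1 - 1) (δ + 1) - δ') ≠ S (L.getD (idx + 1 - 1) (δ + 1) - δ)
      have hgetD : L.getD (idx + 1 - 1) (δ + 1) = i₀ := by
        simp only [Nat.add_sub_cancel]
        rw [List.getD_eq_getElem L _ hidx]
        exact hget
      rw [hgetD]
      refine ⟨by omega, by omega, ?_⟩
      rw [hstep]
      exact hneq
  · -- aperiodic case
    push_neg at hple
    obtain ⟨δ, hδA, L, hlen, hbound, hkill⟩ :=
      rec_lemma S n (fun _ => True) (fun _ => True)
        (fun m M hM hmM _ => by
          obtain ⟨i, h1, h2, h3⟩ := key_ap ⟨hp1, hpn, hper⟩ hmin hple m M hM hmM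
          exact ⟨i, trivial, h1, h2, h3⟩)
        (w - 1) (Finset.range (n / 2 + 1))
        (fun x hx => by have := Finset.mem_range.mp hx; omega)
        (fun a ha b hb hab => trivial)
        ⟨0, Finset.mem_range.mpr (by omega)⟩
        (by rw [Finset.card_range]; omega)
    have hδ2 : δ ≤ n / 2 := by have := Finset.mem_range.mp hδA; omega
    refine ⟨δ, fun j => L.getD (j - 1) (δ + 1), hδ2, ?_, ?_⟩
    · intro j hj1 hjw
      show δ + 1 ≤ L.getD (j - 1) (δ + 1) ∧ L.getD (j - 1) (δ + 1) ≤ δ + n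
      by_cases hcase : j - 1 < L.length
      · have hmem : L.getD (j - 1) (δ + 1) ∈ L := by
          rw [List.getD_eq_getElem L _ hcase]
          exact List.getElem_mem hcase
        have := hbound _ hmem
        omega
      · rw [List.getD_eq_default L _ (by omega)]
        omega
    · intro δ' hδ' hnd
      have hδ'ne : δ' ≠ δ := by
        intro h
        apply hnd
        rw [h]
        simp
      obtain ⟨i₀, hi₀L, _, hb1, hb2, hneq⟩ :=
        hkill δ' (Finset.mem_range.mpr (by omega)) hδ'ne
      obtain ⟨idx, hidx, hget⟩ := List.getElem_of_mem hi₀L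
      refine ⟨idx + 1, by omega, by omega, ?_⟩
      show δ' + 1 ≤ L.getD (idx + 1 - 1) (δ + 1) ∧ L.getD (idx + 1 - 1) (δ + 1) ≤ δ' + n ∧
        S (L.getD (idx + 1 - 1) (δ + 1) - δ') ≠ S (L.getD (idx + 1 - 1) (δ + 1) - δ)
      have hgetD : L.getD (idx + 1 - 1) (δ + 1) = i₀ := by
        simp only [Nat.add_sub_cancel]
        rw [List.getD_eq_getElem L _ hidx]
        exact hget
      rw [hgetD]
      exact ⟨hb1, hb2, hneq⟩
end

section
/- Let m and d be positive integers with 1 ≤ d ≤ ⌊m/4⌋, let S be a string of length m + d, and set U = S[1 .. m] and V = S[d+1 .. d+m]. Suppose (δ; i_1, …, i_w) with δ ∈ [0 .. ⌊m/2⌋] and i_j − δ ∈ [1 .. m] for all j ∈ [1 .. w] is a successful deterministic sample for both U and V. If per(U) = per(V) and U[i_j − δ] = V[i_j − δ] for all j ∈ [1 .. w], then U = V and d is a period of S. -/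
/-- `(δ; i 1, …, i w)` is a *successful deterministic sample* for the length-`m` string `W`:
`δ ∈ [0 .. ⌊m/2⌋]`, each checkpoint satisfies `i j - δ ∈ [1 .. m]`, and for every
`δ' ∈ [0 .. ⌊m/2⌋]` with `δ' - δ` not an integer multiple of `per(W)` there is a
checkpoint `i j` with `i j - δ' ∈ [1 .. m]` and `W[i j - δ'] ≠ W[i j - δ]`. -/
def SuccessfulDS {α : Type*} (W : ℕ → α) (m w : ℕ) (δ : ℕ) (i : ℕ → ℕ) : Prop :=
  δ ≤ m / 2 ∧ (∀ j, 1 ≤ j → j ≤ w → δ + 1 ≤ i j ∧ i j ≤ δ + m) ∧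
    ∀ δ', δ' ≤ m / 2 → ¬ ((minPer W m : ℤ) ∣ ((δ' : ℤ) - (δ : ℤ))) →
      ∃ j, 1 ≤ j ∧ j ≤ w ∧ δ' + 1 ≤ i j ∧ i j ≤ δ' + m ∧ W (i j - δ') ≠ W (i j - δ)

lemma periodMul {α : Type*} (S : ℕ → α) (n p : ℕ)
    (hp : ∀ i, 1 ≤ i → i + p ≤ n → S i = S (i + p)) :
    ∀ q i, 1 ≤ i → i + q * p ≤ n → S i = S (i + q * p) := by
  intro q
  induction q with
  | zero => intro i _ _; simp
  | succ q ih =>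
    intro t ht1 ht2
    have h1 : t + q * p ≤ n := by nlinarith [Nat.succ_mul q p]
    have h2 := ih t ht1 h1
    have h3 := hp (t + q * p) (by omega) (by rw [Nat.succ_mul] at ht2; omega)
    rw [h2, h3, Nat.succ_mul, Nat.add_assoc]

/-- Deterministic samples distinguish two heavily-overlapping windows.
Here `U = S[1 .. m]` is the map `t ↦ S t` and `V = S[d+1 .. d+m]` is the map `t ↦ S (d+t)`.
If a common tuple `(δ; i 1, …, i w)` is a successful deterministic sample for both `U` and
`V`, `per(U) = per(V)`, and `U[i j - δ] = V[i j - δ]` for all checkpoints, then `U = V`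
and `d` is a period of `S` (of length `m + d`). -/
theorem deterministic_sample_distinguishes {α : Type*} (m d w : ℕ)
    (hd : 1 ≤ d) (hdm : d ≤ m / 4)
    (S : ℕ → α) (δ : ℕ) (i : ℕ → ℕ)
    (hU : SuccessfulDS (fun t => S t) m w δ i)
    (hV : SuccessfulDS (fun t => S (d + t)) m w δ i)
    (hper : minPer (fun t => S t) m = minPer (fun t => S (d + t)) m)
    (heq : ∀ j, 1 ≤ j → j ≤ w → S (i j - δ) = S (d + (i j - δ))) :
    (∀ t, 1 ≤ t → t ≤ m → S t = S (d + t)) ∧ IsPeriod S (m + d) d := by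
  have hm4 : 4 * d ≤ m := by omega
  have hm1 : 1 ≤ m := by omega
  set p := minPer (fun t => S t) m with hp_def
  have hUm : IsPeriod (fun t => S t) m m := ⟨hm1, le_refl m, fun i h1 h2 => by omega⟩
  have hVm : IsPeriod (fun t => S (d + t)) m m := ⟨hm1, le_refl m, fun i h1 h2 => by omega⟩
  have hpU : IsPeriod (fun t => S t) m p :=
    Nat.sInf_mem (s := {p | IsPeriod (fun t => S t) m p}) ⟨m, hUm⟩
  have hpV : IsPeriod (fun t => S (d + t)) m p := by
    rw [hper]
    exact Nat.sInf_mem (s := {p | IsPeriod (fun t => S (d + t)) m p}) ⟨m, hVm⟩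
  have hp1 : 1 ≤ p := hpU.1
  have hδm : δ ≤ m / 2 := hU.1
  -- p divides d
  have pdvd : p ∣ d := by
    by_contra hnd
    by_cases hδ : d ≤ δ
    · have hnd' : ¬ ((minPer (fun t => S t) m : ℤ) ∣ (((δ - d : ℕ) : ℤ) - (δ : ℤ))) := by
        intro h
        have e : (((δ - d : ℕ) : ℤ) - (δ : ℤ)) = -(d : ℤ) := by
          push_cast [hδ]; ring
        rw [e, Int.dvd_neg, Int.natCast_dvd_natCast] at h
        exact hnd h
      obtain ⟨j, hj1, hjw, hlo, hhi, hne⟩ := hU.2.2 (δ - d) (by omega) hnd'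
      have hij := (hU.2.1 j hj1 hjw).1
      have e : i j - (δ - d) = d + (i j - δ) := by omega
      exact hne (by simp only [e]; exact (heq j hj1 hjw).symm)
    · have hδ2 : δ + d ≤ m / 2 := by omega
      have hnd' : ¬ ((minPer (fun t => S (d + t)) m : ℤ) ∣ (((δ + d : ℕ) : ℤ) - (δ : ℤ))) := by
        intro h
        have e : (((δ + d : ℕ) : ℤ) - (δ : ℤ)) = (d : ℤ) := by push_cast; ring
        rw [e, ← hper, Int.natCast_dvd_natCast] at h
        exact hnd h
      obtain ⟨j, hj1, hjw, hlo, hhi, hne⟩ := hV.2.2 (δ + d) hδ2 hnd'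
      have e : d + (i j - (δ + d)) = i j - δ := by omega
      exact hne (by simp only [e]; exact heq j hj1 hjw)
  obtain ⟨q, hq⟩ := pdvd
  have hqp : q * p = d := by rw [hq, Nat.mul_comm]
  have main : ∀ t, 1 ≤ t → t ≤ m → S t = S (d + t) := by
    intro t ht1 ht2
    by_cases htd : t + d ≤ m
    · have := periodMul (fun t => S t) m p hpU.2.2 q t ht1 (by rw [hqp]; exact htd)
      rw [this]
      congr 1
      omega
    · have htd' : d + 1 ≤ t := by omega
      have := periodMul (fun t => S (d + t)) m p hpV.2.2 q (t - d) (by omega)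
        (by rw [hqp]; omega)
      have e1 : d + (t - d) = t := by omega
      have e2 : d + (t - d + q * p) = d + t := by rw [hqp]; omega
      rw [e1, e2] at this
      exact this
  exact ⟨main, hd, by omega, fun j h1 h2 => by
    rw [main j h1 (by omega)]; congr 1; omega⟩
end

section
/- Let m and d be positive integers, let S be a string of length m + d, and let p be a positive integer satisfying p = per(S[1 .. m]) = per(S[d+1 .. d+m]) and p < m − d. Then per(S[1 .. m+d]) = p. Moreover, if p divides d, then S[1 .. m] = S[d+1 .. d+m]. -/
/-- If `p = per(S[1 .. m]) = per(S[d+1 .. d+m])` and `p < m - d`, then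
`per(S[1 .. m+d]) = p`; moreover, if `p ∣ d` then `S[1 .. m] = S[d+1 .. d+m]`.
Here `S[1 .. m]` is `t ↦ S t` (length `m`) and `S[d+1 .. d+m]` is `t ↦ S (d+t)` (length `m`). -/
theorem period_glues_overlapping_windows {α : Type*} (S : ℕ → α) (m d p : ℕ)
    (hm : 1 ≤ m) (hd : 1 ≤ d) (hp : 1 ≤ p)
    (h1 : minPer S m = p)
    (h2 : minPer (fun t => S (d + t)) m = p)
    (hlt : p < m - d) :
    minPer S (m + d) = p ∧ (p ∣ d → ∀ t, 1 ≤ t → t ≤ m → S t = S (d + t)) := by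
  have hne1 : {q | IsPeriod S m q}.Nonempty := by
    by_contra h
    rw [Set.not_nonempty_iff_eq_empty] at h
    rw [minPer, h, Nat.sInf_empty] at h1
    omega
  have hne2 : {q | IsPeriod (fun t => S (d + t)) m q}.Nonempty := by
    by_contra h
    rw [Set.not_nonempty_iff_eq_empty] at h
    rw [minPer, h, Nat.sInf_empty] at h2
    omega
  have hP1 : IsPeriod S m p := h1 ▸ Nat.sInf_mem hne1
  have hP2 : IsPeriod (fun t => S (d + t)) m p := h2 ▸ Nat.sInf_mem hne2
  have hPbig : IsPeriod S (m + d) p := by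
    refine ⟨hp, by omega, fun i hi hip => ?_⟩
    by_cases hc : i + p ≤ m
    · exact hP1.2.2 i hi hc
    · obtain ⟨j, rfl⟩ : ∃ j, i = d + j := ⟨i - d, by omega⟩
      have hj : 1 ≤ j := by omega
      have := hP2.2.2 j hj (by omega)
      simpa [Nat.add_assoc] using this
  constructor
  · apply le_antisymm
    · exact Nat.sInf_le hPbig
    · refine le_csInf ⟨p, hPbig⟩ ?_
      intro q hq
      by_cases hqm : q ≤ m
      · have hqP : IsPeriod S m q :=
          ⟨hq.1, hqm, fun i hi hip => hq.2.2 i hi (by omega)⟩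
        exact h1 ▸ Nat.sInf_le hqP
      · have : p ≤ m := hP1.2.1
        omega
  · intro hdvd t ht htm
    obtain ⟨k, hk⟩ := hdvd
    have key : ∀ j t, 1 ≤ t → t + p * j ≤ m + d → S t = S (t + p * j) := by
      intro j
      induction j with
      | zero => simp
      | succ j ih =>
        intro t ht hle
        rw [Nat.mul_succ] at hle ⊢
        have ha := hPbig.2.2 t ht (by omega)
        have hb := ih (t + p) (by omega) (by omega)
        rw [ha, hb]
        ring_nf
    have := key k t ht (by omega)
    rw [this, hk]
    ring_nf
end

section
/- Let Y be a set, let D and N be positive integers, and let ψ : [1 .. N] → Y^D be an injective function, where ψ(k) = (ψ(k)_1, …, ψ(k)_D). For k ∈ [1 .. N] and j ∈ [1 .. D], define c_{j,k} = |{ψ(k')_j : k' ∈ [1 .. k] and (ψ(k')_1, …, ψ(k')_{j−1}) = (ψ(k)_1, …, ψ(k)_{j−1})}| (note c_{j,k} ≥ 1 since k' = k is allowed). Then Σ_{k=1}^{N} Π_{j=1}^{D} 1/c_{j,k} ≤ (Σ_{t=1}^{N} 1/t)^D. -/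
open scoped Classical

open Finset

private lemma trie_harmonic_nonneg (n : ℕ) : 0 ≤ ∑ t ∈ Finset.Icc 1 n, (1:ℝ)/(t:ℝ) :=
  Finset.sum_nonneg fun t _ => by positivity

private lemma trie_harmonic_mono {m n : ℕ} (h : m ≤ n) :
    ∑ t ∈ Finset.Icc 1 m, (1:ℝ)/(t:ℝ) ≤ ∑ t ∈ Finset.Icc 1 n, (1:ℝ)/(t:ℝ) :=
  Finset.sum_le_sum_of_subset_of_nonneg (Finset.Icc_subset_Icc_right h)
    (fun t _ _ => by positivity)

set_option maxHeartbeats 2000000 in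
private theorem trie_aux {Y : Type*} (D : ℕ) : ∀ (s : ℕ) (S : Finset ℕ) (ψ : ℕ → ℕ → Y),
    (∀ k ∈ S, ∀ k' ∈ S, (∀ j ∈ Finset.Icc (s+1) (s+D), ψ k j = ψ k' j) → k = k') →
    ∑ k ∈ S, ∏ j ∈ Finset.Icc (s+1) (s+D),
      (1:ℝ) / (((S.filter (fun k' => k' ≤ k ∧
          ∀ j' ∈ Finset.Icc (s+1) (j-1), ψ k' j' = ψ k j')).image
        (fun k' => ψ k' j)).card : ℝ)
    ≤ (∑ t ∈ Finset.Icc 1 S.card, (1:ℝ)/(t:ℝ)) ^ D := by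
  induction D with
  | zero =>
    intro s S ψ hinj
    have hempty : Finset.Icc (s+1) (s+0) = ∅ := by
      rw [Nat.add_zero]; exact Finset.Icc_eq_empty (by omega)
    have hcard : S.card ≤ 1 :=
      Finset.card_le_one.mpr (fun a ha b hb => hinj a ha b hb (by simp [hempty]))
    simp only [hempty, Finset.prod_empty, pow_zero, Finset.sum_const, nsmul_eq_mul, mul_one]
    exact_mod_cast hcard
  | succ D ih =>
    intro s S ψ hinj
    have hH0 : (0:ℝ) ≤ ∑ t ∈ Finset.Icc 1 S.card, (1:ℝ)/(t:ℝ) := trie_harmonic_nonneg _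
    -- fibers by first coordinate
    set Ys : Finset Y := S.image (fun k => ψ k (s+1)) with hYs
    set Sy : Y → Finset ℕ := fun y => S.filter (fun k => ψ k (s+1) = y) with hSy
    have hfib : ∀ (F : ℕ → ℝ), ∑ y ∈ Ys, ∑ k ∈ Sy y, F k = ∑ k ∈ S, F k := fun F =>
      Finset.sum_fiberwise_of_maps_to (fun k hk => Finset.mem_image_of_mem _ hk) F
    set kmin : Y → ℕ := fun y => sInf {k | k ∈ Sy y} with hkmin
    have hSymem : ∀ y k, k ∈ Sy y ↔ (k ∈ S ∧ ψ k (s+1) = y) := by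
      intro y k; rw [hSy]; simp only [Finset.mem_filter]
    have hkmem : ∀ y ∈ Ys, kmin y ∈ Sy y := by
      intro y hy
      obtain ⟨k, hk, hke⟩ := Finset.mem_image.mp hy
      exact Nat.sInf_mem ⟨k, (hSymem y k).mpr ⟨hk, hke⟩⟩
    have hkle : ∀ y, ∀ k ∈ Sy y, kmin y ≤ k := fun y k hk => Nat.sInf_le hk
    set m : Y → ℕ := fun y =>
      ((S.filter (fun k' => k' ≤ kmin y)).image (fun k' => ψ k' (s+1))).card with hm
    have hval : ∀ y ∈ Ys, ψ (kmin y) (s+1) = y := by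
      intro y hy; exact ((hSymem y _).mp (hkmem y hy)).2
    have hkS : ∀ y ∈ Ys, kmin y ∈ S := by
      intro y hy; exact ((hSymem y _).mp (hkmem y hy)).1
    have hmlt : ∀ y ∈ Ys, ∀ y' ∈ Ys, kmin y < kmin y' → m y < m y' := by
      intro y hy y' hy' hlt
      apply Finset.card_lt_card
      have hsub : (S.filter (fun k' => k' ≤ kmin y)).image (fun k' => ψ k' (s+1)) ⊆
          (S.filter (fun k' => k' ≤ kmin y')).image (fun k' => ψ k' (s+1)) := by
        apply Finset.image_subset_image
        intro x hx
        simp only [Finset.mem_filter] at hx ⊢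
        exact ⟨hx.1, by omega⟩
      refine (Finset.ssubset_iff_of_subset hsub).mpr ⟨y', ?_, ?_⟩
      · exact Finset.mem_image.mpr ⟨kmin y', by
          simp only [Finset.mem_filter]; exact ⟨hkS y' hy', le_refl _⟩, hval y' hy'⟩
      · intro hmem
        obtain ⟨k'', hk'', hke⟩ := Finset.mem_image.mp hmem
        simp only [Finset.mem_filter] at hk''
        have : kmin y' ≤ k'' := hkle y' k'' ((hSymem y' k'').mpr ⟨hk''.1, hke⟩)
        omega
    have hminj : ∀ y ∈ Ys, ∀ y' ∈ Ys, m y = m y' → y = y' := by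
      intro y hy y' hy' he
      rcases lt_trichotomy (kmin y) (kmin y') with h | h | h
      · exact absurd he (Nat.ne_of_lt (hmlt y hy y' hy' h))
      · rw [← hval y hy, ← hval y' hy', h]
      · exact absurd he.symm (Nat.ne_of_lt (hmlt y' hy' y hy h))
    have hm1 : ∀ y ∈ Ys, 1 ≤ m y := by
      intro y hy
      have : ψ (kmin y) (s+1) ∈ (S.filter (fun k' => k' ≤ kmin y)).image
          (fun k' => ψ k' (s+1)) :=
        Finset.mem_image_of_mem _ (by
          simp only [Finset.mem_filter]; exact ⟨hkS y hy, le_refl _⟩)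
      exact Finset.card_pos.mpr ⟨_, this⟩
    have hmN : ∀ y ∈ Ys, m y ≤ S.card := fun y hy =>
      Finset.card_image_le.trans (Finset.card_le_card (Finset.filter_subset _ _))
    -- sum of 1/m over classes is at most harmonic
    have hsum_m : ∑ y ∈ Ys, (1:ℝ)/(m y : ℝ) ≤ ∑ t ∈ Finset.Icc 1 S.card, (1:ℝ)/(t:ℝ) := by
      have himg := Finset.sum_image (s := Ys) (g := m) (f := fun t : ℕ => (1:ℝ)/(t:ℝ)) hminj
      rw [← himg]
      refine Finset.sum_le_sum_of_subset_of_nonneg ?_ (fun t _ _ => by positivity)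
      intro t ht
      obtain ⟨y, hy, rfl⟩ := Finset.mem_image.mp ht
      exact Finset.mem_Icc.mpr ⟨hm1 y hy, hmN y hy⟩
    -- split the product
    have hins : Finset.Icc (s+1) (s+(D+1)) = insert (s+1) (Finset.Icc (s+2) (s+D+1)) := by
      ext j; simp only [Finset.mem_Icc, Finset.mem_insert]; omega
    have hnotmem : s+1 ∉ Finset.Icc (s+2) (s+D+1) := by simp [Finset.mem_Icc]
    rw [← hfib]
    have key : ∀ y ∈ Ys, ∑ k ∈ Sy y, ∏ j ∈ Finset.Icc (s+1) (s+(D+1)),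
        (1:ℝ) / (((S.filter (fun k' => k' ≤ k ∧
            ∀ j' ∈ Finset.Icc (s+1) (j-1), ψ k' j' = ψ k j')).image
          (fun k' => ψ k' j)).card : ℝ)
        ≤ (1/(m y : ℝ)) * (∑ t ∈ Finset.Icc 1 S.card, (1:ℝ)/(t:ℝ)) ^ D := by
      intro y hy
      have hterm : ∀ k ∈ Sy y, ∏ j ∈ Finset.Icc (s+1) (s+(D+1)),
          (1:ℝ) / (((S.filter (fun k' => k' ≤ k ∧
              ∀ j' ∈ Finset.Icc (s+1) (j-1), ψ k' j' = ψ k j')).image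
            (fun k' => ψ k' j)).card : ℝ)
          ≤ (1/(m y : ℝ)) * ∏ j ∈ Finset.Icc (s+2) (s+D+1),
            (1:ℝ) / ((((Sy y).filter (fun k' => k' ≤ k ∧
                ∀ j' ∈ Finset.Icc (s+2) (j-1), ψ k' j' = ψ k j')).image
              (fun k' => ψ k' j)).card : ℝ) := by
        intro k hk
        obtain ⟨hkS', hky⟩ := (hSymem y k).mp hk
        rw [hins, Finset.prod_insert hnotmem]
        have hfix : ∀ j ∈ Finset.Icc (s+2) (s+D+1),
            S.filter (fun k' => k' ≤ k ∧ ∀ j' ∈ Finset.Icc (s+1) (j-1), ψ k' j' = ψ k j')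
            = (Sy y).filter (fun k' => k' ≤ k ∧
                ∀ j' ∈ Finset.Icc (s+2) (j-1), ψ k' j' = ψ k j') := by
          intro j hj
          have hj2 : s+2 ≤ j := (Finset.mem_Icc.mp hj).1
          have hjD : j ≤ s+D+1 := (Finset.mem_Icc.mp hj).2
          ext k'
          simp only [Finset.mem_filter, hSymem]
          constructor
          · rintro ⟨h1, h2, h3⟩
            have hys : ψ k' (s+1) = y := by
              rw [h3 (s+1) (Finset.mem_Icc.mpr ⟨le_rfl, by omega⟩), hky]
            refine ⟨⟨h1, hys⟩, h2, fun j' hj' => ?_⟩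
            obtain ⟨ha, hb⟩ := Finset.mem_Icc.mp hj'
            exact h3 j' (Finset.mem_Icc.mpr ⟨by omega, hb⟩)
          · rintro ⟨⟨h1, hys⟩, h2, h3⟩
            refine ⟨h1, h2, fun j' hj' => ?_⟩
            obtain ⟨ha, hb⟩ := Finset.mem_Icc.mp hj'
            rcases eq_or_lt_of_le ha with h | h
            · rw [← h, hys, hky]
            · exact h3 j' (Finset.mem_Icc.mpr ⟨by omega, hb⟩)
        have hprod_eq : (∏ j ∈ Finset.Icc (s+2) (s+D+1),
            (1:ℝ) / (((S.filter (fun k' => k' ≤ k ∧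
                ∀ j' ∈ Finset.Icc (s+1) (j-1), ψ k' j' = ψ k j')).image
              (fun k' => ψ k' j)).card : ℝ))
            = ∏ j ∈ Finset.Icc (s+2) (s+D+1),
            (1:ℝ) / ((((Sy y).filter (fun k' => k' ≤ k ∧
                ∀ j' ∈ Finset.Icc (s+2) (j-1), ψ k' j' = ψ k j')).image
              (fun k' => ψ k' j)).card : ℝ) :=
          Finset.prod_congr rfl (fun j hj => by rw [hfix j hj])
        rw [hprod_eq]
        refine mul_le_mul_of_nonneg_right ?_
          (Finset.prod_nonneg fun j _ => by positivity)
        have hmpos : (0:ℝ) < (m y : ℝ) := by exact_mod_cast hm1 y hy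
        refine one_div_le_one_div_of_le hmpos ?_
        have hsub : (S.filter (fun k' => k' ≤ kmin y)).image (fun k' => ψ k' (s+1)) ⊆
            (S.filter (fun k' => k' ≤ k ∧
              ∀ j' ∈ Finset.Icc (s+1) (s+1-1), ψ k' j' = ψ k j')).image
              (fun k' => ψ k' (s+1)) := by
          apply Finset.image_subset_image
          intro k'' hk''
          simp only [Finset.mem_filter] at hk'' ⊢
          have hkk : kmin y ≤ k := hkle y k hk
          refine ⟨hk''.1, by omega, fun j' hj' => ?_⟩
          obtain ⟨ha, hb⟩ := Finset.mem_Icc.mp hj'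
          omega
        exact_mod_cast Finset.card_le_card hsub
      have hIH : ∑ k ∈ Sy y, ∏ j ∈ Finset.Icc (s+2) (s+D+1),
          (1:ℝ) / ((((Sy y).filter (fun k' => k' ≤ k ∧
              ∀ j' ∈ Finset.Icc (s+2) (j-1), ψ k' j' = ψ k j')).image
            (fun k' => ψ k' j)).card : ℝ)
          ≤ (∑ t ∈ Finset.Icc 1 S.card, (1:ℝ)/(t:ℝ)) ^ D := by
        have hinj' : ∀ k ∈ Sy y, ∀ k' ∈ Sy y,
            (∀ j ∈ Finset.Icc (s+1+1) (s+1+D), ψ k j = ψ k' j) → k = k' := by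
          intro k hk k' hk' hagree
          obtain ⟨hkS1, hky1⟩ := (hSymem y k).mp hk
          obtain ⟨hkS2, hky2⟩ := (hSymem y k').mp hk'
          refine hinj k hkS1 k' hkS2 (fun j hj => ?_)
          obtain ⟨ha, hb⟩ := Finset.mem_Icc.mp hj
          rcases eq_or_lt_of_le ha with h | h
          · rw [← h, hky1, hky2]
          · exact hagree j (Finset.mem_Icc.mpr ⟨by omega, by omega⟩)
        have := ih (s+1) (Sy y) ψ hinj'
        rw [show s+1+D = s+D+1 by omega] at this
        refine this.trans ?_
        exact pow_le_pow_left₀ (trie_harmonic_nonneg _)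
          (trie_harmonic_mono (Finset.card_le_card (Finset.filter_subset _ _))) D
      refine (Finset.sum_le_sum hterm).trans ?_
      rw [← Finset.mul_sum]
      exact mul_le_mul_of_nonneg_left hIH (by positivity)
    refine (Finset.sum_le_sum key).trans ?_
    rw [← Finset.sum_mul]
    calc (∑ y ∈ Ys, (1:ℝ)/(m y : ℝ)) * (∑ t ∈ Finset.Icc 1 S.card, (1:ℝ)/(t:ℝ)) ^ D
        ≤ (∑ t ∈ Finset.Icc 1 S.card, (1:ℝ)/(t:ℝ)) *
          (∑ t ∈ Finset.Icc 1 S.card, (1:ℝ)/(t:ℝ)) ^ D :=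
        mul_le_mul_of_nonneg_right hsum_m (pow_nonneg hH0 D)
      _ = (∑ t ∈ Finset.Icc 1 S.card, (1:ℝ)/(t:ℝ)) ^ (D+1) := (pow_succ' _ _).symm

/-- **Trie counting bound.** Let `ψ : [1 .. N] → Y^D` be injective (tuples are modeled as
maps `ℕ → Y` read at coordinates `1, …, D`).  For `k ∈ [1 .. N]` and `j ∈ [1 .. D]`, let
`c j k` be the number of distinct `j`-th coordinates among those `ψ(k')` with `k' ≤ k`
agreeing with `ψ(k)` on the first `j - 1` coordinates.  Then
`Σ_{k=1}^{N} Π_{j=1}^{D} 1/c j k ≤ (Σ_{t=1}^{N} 1/t)^D`. -/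
theorem trie_counting_bound {Y : Type*} (D N : ℕ)
    (hD : 1 ≤ D) (hN : 1 ≤ N)
    (ψ : ℕ → ℕ → Y)
    (hinj : ∀ k ∈ Finset.Icc 1 N, ∀ k' ∈ Finset.Icc 1 N,
      (∀ j ∈ Finset.Icc 1 D, ψ k j = ψ k' j) → k = k') :
    ∑ k ∈ Finset.Icc 1 N, ∏ j ∈ Finset.Icc 1 D,
      (1 : ℝ) / ((((Finset.Icc 1 k).filter
          (fun k' => ∀ j' ∈ Finset.Icc 1 (j - 1), ψ k' j' = ψ k j')).image
            (fun k' => ψ k' j)).card : ℝ)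
      ≤ (∑ t ∈ Finset.Icc 1 N, (1 : ℝ) / (t : ℝ)) ^ D := by
  have key := trie_aux D 0 (Finset.Icc 1 N) ψ ?_
  · simp only [Nat.zero_add, Nat.card_Icc, Nat.add_sub_cancel] at key
    refine le_trans (le_of_eq ?_) key
    refine Finset.sum_congr rfl (fun k hk => Finset.prod_congr rfl (fun j hj => ?_))
    obtain ⟨hk1, hk2⟩ := Finset.mem_Icc.mp hk
    have hset : (Finset.Icc 1 k).filter
          (fun k' => ∀ j' ∈ Finset.Icc 1 (j - 1), ψ k' j' = ψ k j')
        = (Finset.Icc 1 N).filter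
          (fun k' => k' ≤ k ∧ ∀ j' ∈ Finset.Icc 1 (j - 1), ψ k' j' = ψ k j') := by
      ext k'
      simp only [Finset.mem_filter, Finset.mem_Icc]
      constructor
      · rintro ⟨⟨h1, h2⟩, hp⟩
        exact ⟨⟨h1, h2.trans hk2⟩, h2, hp⟩
      · rintro ⟨⟨h1, _⟩, h2, hp⟩
        exact ⟨⟨h1, h2⟩, hp⟩
    rw [hset]
    congr
  · intro k hk k' hk' h
    refine hinj k hk k' hk' (fun j hj => h j ?_)
    simpa using hj
end

section
/- Let Σ be an alphabet, ⋆ a symbol not in Σ, and let m, d be positive integers. Let a, b : [1..m] × [1..d] → Σ ∪ {⋆} be arrays such that for every i ∈ [1..m], the row (a_{i,1}, …, a_{i,d}) contains exactly one non-⋆ entry, denoted ã_i ∈ Σ, and likewise each row of b contains exactly one non-⋆ entry b̃_j ∈ Σ. Let #_1, …, #_{m−1}, $_1, …, $_{m−1} be 2(m−1) pairwise distinct symbols not in Σ ∪ {⋆}. Define S = A_1 #_1 A_2 #_2 ⋯ #_{m−1} A_m where A_i = ⋆^{10d} a_{i,1} a_{i,2} ⋯ a_{i,d} ⋆^{10d},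 and define T = B_1 $_1 B_2 $_2 ⋯ $_{m−1} B_m where B_j = ⋆^{10d} b_{j,1} b_{j,2} ⋯ b_{j,d} ⋆^{10d}. Then: (1) if there exist i, j ∈ [1..m] with ã_i = b̃_j, then S and T have a common substring of length at least 20d + 1; and (2) if S and T have a common substring of length at least 11d, then there exist i, j ∈ [1..m] with ã_i = b̃_j. -/
/-- The extended alphabet: letters of `σ` (the alphabet `Σ`), the symbol `⋆`,
the delimiter symbols `#_i`, and the delimiter symbols `$_i`.  By construction all of
these are pairwise distinct, `⋆ ∉ Σ`, and the delimiters lie outside `Σ ∪ {⋆}`. -/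
inductive GadgetSym (σ : Type*) where
  | letter : σ → GadgetSym σ
  | star : GadgetSym σ
  | hash : ℕ → GadgetSym σ
  | dollar : ℕ → GadgetSym σ

/-- The block `⋆^{10d} x_{i,1} x_{i,2} ⋯ x_{i,d} ⋆^{10d}` built from row `i` of `x`. -/
def blockOf {σ : Type*} (x : ℕ → ℕ → GadgetSym σ) (d i : ℕ) : List (GadgetSym σ) :=
  List.replicate (10 * d) GadgetSym.star ++ (List.range d).map (fun j => x i (j + 1)) ++
    List.replicate (10 * d) GadgetSym.star

/-- The string `A_1 δ_1 A_2 δ_2 ⋯ δ_{m-1} A_m`, where `A_i` is the block of row `i`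
of `x` and `δ_i` is the `i`-th delimiter. -/
def bigString {σ : Type*} (x : ℕ → ℕ → GadgetSym σ) (delim : ℕ → GadgetSym σ) (m d : ℕ) :
    List (GadgetSym σ) :=
  ((List.range m).map
    (fun i₀ => blockOf x d (i₀ + 1) ++ if i₀ + 1 < m then [delim (i₀ + 1)] else [])).flatten

/-- splitting lemma -/
lemma infix_split {α : Type*} {W u v : List α} {δ : α}
    (h : W <:+: u ++ δ :: v) (hδ : δ ∉ W) : W <:+: u ∨ W <:+: v := by
  obtain ⟨x, y, hxy⟩ := h
  rcases le_or_gt (x.length + W.length) u.length with h1 | h1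
  · left
    have hpre : x ++ W <+: u := by
      have h2 : (x ++ W ++ y).take (x.length + W.length) = x ++ W := by
        rw [List.append_assoc, List.take_append]
        simp
      have h3 : (u ++ δ :: v).take (x.length + W.length) = u.take (x.length + W.length) := by
        rw [List.take_append, Nat.sub_eq_zero_of_le h1]
        simp
      rw [hxy, h3] at h2
      exact h2 ▸ List.take_prefix _ _
    exact ((List.suffix_append x W).isInfix).trans hpre.isInfix
  · rcases le_or_gt x.length u.length with h2 | h2
    · exfalso
      apply hδ
      have hlt : u.length < (x ++ W ++ y).length := by
        rw [hxy]; simp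
      have e1 : (x ++ W ++ y)[u.length]'hlt = δ := by
        rw [List.getElem_of_eq hxy]
        rw [List.getElem_append_right (le_refl u.length)]
        simp
      have hlt2 : u.length < (x ++ W).length := by
        simp only [List.length_append]; omega
      have e2 : (x ++ W ++ y)[u.length]'hlt = (x ++ W)[u.length]'hlt2 :=
        List.getElem_append_left hlt2
      have e3 : (x ++ W)[u.length]'hlt2 = W[u.length - x.length]'(by omega) :=
        List.getElem_append_right h2
      rw [e2, e3] at e1
      exact e1 ▸ List.getElem_mem _
    · right
      have hdrop : (x ++ (W ++ y)).drop x.length = W ++ y := by simp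
      have hdrop2 : (u ++ δ :: v).drop x.length = (δ :: v).drop (x.length - u.length) := by
        rw [List.drop_append, List.drop_eq_nil_of_le (le_of_lt h2)]
        simp
      rw [← List.append_assoc, hxy] at hdrop
      rw [hdrop2] at hdrop
      have hsuf : W ++ y <:+ v := by
        have : (δ :: v).drop (x.length - u.length) = v.drop (x.length - u.length - 1) := by
          rw [show x.length - u.length = (x.length - u.length - 1) + 1 by omega]
          simp
        rw [this] at hdrop
        exact hdrop ▸ List.drop_suffix _ _
      exact ((List.prefix_append W y).isInfix).trans hsuf.isInfix


lemma row_eq {σ : Type*} (x : ℕ → ℕ → GadgetSym σ) (i d p : ℕ) (c : σ)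
    (hp1 : 1 ≤ p) (hpd : p ≤ d) (hxp : x i p = GadgetSym.letter c)
    (hstar : ∀ j', 1 ≤ j' → j' ≤ d → j' ≠ p → x i j' = GadgetSym.star) :
    (List.range d).map (fun j => x i (j + 1)) =
      List.replicate (p - 1) GadgetSym.star ++ GadgetSym.letter c ::
        List.replicate (d - p) GadgetSym.star := by
  apply List.ext_getElem
  · simp; omega
  · intro n h1 h2
    simp only [List.length_map, List.length_range] at h1
    simp only [List.getElem_map, List.getElem_range]
    rcases lt_trichotomy n (p - 1) with hn | hn | hn
    · rw [List.getElem_append_left (by simpa using hn), List.getElem_replicate]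
      exact hstar (n + 1) (by omega) (by omega) (by omega)
    · rw [List.getElem_append_right (by simp; omega)]
      rw [List.getElem_cons]
      simp only [List.length_replicate]
      rw [dif_pos (by omega)]
      rw [show n + 1 = p by omega]
      exact hxp
    · rw [List.getElem_append_right (by simp; omega)]
      rw [List.getElem_cons]
      simp only [List.length_replicate]
      rw [dif_neg (by omega), List.getElem_replicate]
      exact hstar (n + 1) (by omega) (by omega) (by omega)

lemma block_eq {σ : Type*} (x : ℕ → ℕ → GadgetSym σ) (i d p : ℕ) (c : σ)
    (hp1 : 1 ≤ p) (hpd : p ≤ d) (hxp : x i p = GadgetSym.letter c)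
    (hstar : ∀ j', 1 ≤ j' → j' ≤ d → j' ≠ p → x i j' = GadgetSym.star) :
    blockOf x d i =
      List.replicate (10 * d + (p - 1)) GadgetSym.star ++ GadgetSym.letter c ::
        List.replicate ((d - p) + 10 * d) GadgetSym.star := by
  unfold blockOf
  rw [row_eq x i d p c hp1 hpd hxp hstar]
  rw [List.replicate_add (10 * d) (p - 1)]
  simp only [List.append_assoc, List.cons_append, List.append_nil]
  rw [← List.replicate_add]

lemma mid_infix {σ : Type*} (c : σ) (d p : ℕ) (hp1 : 1 ≤ p) (hpd : p ≤ d) :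
    (List.replicate (10 * d) GadgetSym.star ++ GadgetSym.letter c ::
        List.replicate (10 * d) GadgetSym.star) <:+:
      (List.replicate (10 * d + (p - 1)) GadgetSym.star ++ GadgetSym.letter c ::
        List.replicate ((d - p) + 10 * d) (GadgetSym.star : GadgetSym σ)) := by
  refine ⟨List.replicate (p - 1) GadgetSym.star, List.replicate (d - p) GadgetSym.star, ?_⟩
  have h1 : (10:ℕ) * d + (p - 1) = (p - 1) + 10 * d := by omega
  have h2 : (d - p) + 10 * d = 10 * d + (d - p) := by omega
  rw [h1, h2, List.replicate_add, List.replicate_add]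
  simp only [List.append_assoc, List.cons_append]

lemma block_infix {σ : Type*} (x : ℕ → ℕ → GadgetSym σ) (δ : ℕ → GadgetSym σ)
    (m d i : ℕ) (h1 : 1 ≤ i) (h2 : i ≤ m) :
    blockOf x d i <:+: bigString x δ m d := by
  have hmem : blockOf x d i ++ (if i < m then [δ i] else []) ∈
      (List.range m).map
        (fun i₀ => blockOf x d (i₀ + 1) ++ if i₀ + 1 < m then [δ (i₀ + 1)] else []) := by
    refine List.mem_map.2 ⟨i - 1, List.mem_range.2 (by omega), ?_⟩
    rw [show i - 1 + 1 = i by omega]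
  exact ((List.prefix_append _ _).isInfix).trans (List.infix_of_mem_flatten hmem)

lemma mem_bigString {σ : Type*} {x : ℕ → ℕ → GadgetSym σ} {δ : ℕ → GadgetSym σ}
    {m d : ℕ} {e : GadgetSym σ} (he : e ∈ bigString x δ m d) :
    e = GadgetSym.star ∨ (∃ i j, 1 ≤ i ∧ i ≤ m ∧ 1 ≤ j ∧ j ≤ d ∧ e = x i j) ∨
      ∃ i, e = δ i := by
  unfold bigString at he
  rw [List.mem_flatten] at he
  obtain ⟨l, hl, hel⟩ := he
  rw [List.mem_map] at hl
  obtain ⟨i₀, hi₀, rfl⟩ := hl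
  rw [List.mem_range] at hi₀
  rcases List.mem_append.1 hel with h | h
  · unfold blockOf at h
    rcases List.mem_append.1 h with h | h
    · rcases List.mem_append.1 h with h | h
      · exact Or.inl (List.eq_of_mem_replicate h)
      · obtain ⟨j, hj, rfl⟩ := List.mem_map.1 h
        rw [List.mem_range] at hj
        exact Or.inr (Or.inl ⟨i₀ + 1, j + 1, by omega, by omega, by omega, by omega, rfl⟩)
    · exact Or.inl (List.eq_of_mem_replicate h)
  · right; right
    split at h
    · simp only [List.mem_singleton] at h
      exact ⟨i₀ + 1, h⟩
    · simp at h

lemma bigString_eq {σ : Type*} (x : ℕ → ℕ → GadgetSym σ) (δ : ℕ → GadgetSym σ) (k d : ℕ) :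
    bigString x δ (k + 1) d =
      ((List.range k).map (fun i₀ => blockOf x d (i₀ + 1) ++ [δ (i₀ + 1)])).flatten ++
        blockOf x d (k + 1) := by
  unfold bigString
  rw [List.range_succ, List.map_append, List.flatten_append]
  congr 1
  · congr 1
    apply List.map_congr_left
    intro i₀ hi₀
    rw [List.mem_range] at hi₀
    rw [if_pos (by omega)]
  · simp

lemma infix_flatten_blocks {α : Type*} (f : ℕ → List α) (δ : ℕ → α) (W : List α)
    (hW : ∀ j, δ j ∉ W) :
    ∀ (k : ℕ) (tail : List α),
      W <:+: ((List.range k).map (fun i₀ => f (i₀ + 1) ++ [δ (i₀ + 1)])).flatten ++ tail →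
      W <:+: tail ∨ ∃ i, 1 ≤ i ∧ i ≤ k ∧ W <:+: f i := by
  intro k
  induction k with
  | zero => intro tail h; left; simpa using h
  | succ k ih =>
    intro tail h
    rw [List.range_succ, List.map_append, List.flatten_append] at h
    have h' : W <:+:
        (((List.range k).map (fun i₀ => f (i₀ + 1) ++ [δ (i₀ + 1)])).flatten ++ f (k + 1)) ++
          δ (k + 1) :: tail := by
      simpa [List.append_assoc] using h
    rcases infix_split h' (hW (k + 1)) with h1 | h2
    · rcases ih (f (k + 1)) h1 with h3 | ⟨i, hi1, hi2, hi3⟩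
      · exact Or.inr ⟨k + 1, by omega, le_refl _, h3⟩
      · exact Or.inr ⟨i, hi1, by omega, hi3⟩
    · exact Or.inl h2

lemma infix_bigString_block {σ : Type*} {x : ℕ → ℕ → GadgetSym σ} {δ : ℕ → GadgetSym σ}
    {m d : ℕ} {W : List (GadgetSym σ)} (hm : 1 ≤ m)
    (hW : ∀ j, δ j ∉ W) (h : W <:+: bigString x δ m d) :
    ∃ i, 1 ≤ i ∧ i ≤ m ∧ W <:+: blockOf x d i := by
  obtain ⟨k, rfl⟩ : ∃ k, m = k + 1 := ⟨m - 1, by omega⟩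
  rw [bigString_eq] at h
  rcases infix_flatten_blocks (fun i => blockOf x d i) δ W hW k (blockOf x d (k + 1)) h with
    h1 | ⟨i, hi1, hi2, hi3⟩
  · exact ⟨k + 1, by omega, le_refl _, h1⟩
  · exact ⟨i, hi1, by omega, hi3⟩

lemma letter_mem_of_infix_block {σ : Type*} {W : List (GadgetSym σ)} {d p : ℕ} {c : σ}
    (hd : 1 ≤ d) (hp1 : 1 ≤ p) (hpd : p ≤ d) (hlen : 11 * d ≤ W.length)
    (h : W <:+: List.replicate (10 * d + (p - 1)) GadgetSym.star ++ GadgetSym.letter c ::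
        List.replicate ((d - p) + 10 * d) (GadgetSym.star : GadgetSym σ)) :
    GadgetSym.letter c ∈ W ∧ ∀ e ∈ W, e = GadgetSym.star ∨ e = GadgetSym.letter c := by
  constructor
  · by_contra hc
    rcases infix_split h hc with h1 | h1 <;>
      have := h1.length_le <;> simp only [List.length_replicate] at this <;> omega
  · intro e he
    have := h.subset he
    rcases List.mem_append.1 this with h1 | h1
    · exact Or.inl (List.eq_of_mem_replicate h1)
    · rcases List.mem_cons.1 h1 with h2 | h2
      · exact Or.inr h2
      · exact Or.inl (List.eq_of_mem_replicate h2)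

/-- **LCS lower-bound gadget.**  Each row of `a` (resp. `b`) has exactly one non-`⋆` entry
`ã i` (resp. `b̃ j`).  With `S = A_1 #_1 ⋯ #_{m-1} A_m` and `T = B_1 $_1 ⋯ $_{m-1} B_m`:
(1) if `ã i = b̃ j` for some `i, j ∈ [1..m]`, then `S` and `T` have a common substring of
length at least `20d + 1`; and (2) if `S` and `T` have a common substring of length at
least `11d`, then `ã i = b̃ j` for some `i, j ∈ [1..m]`. -/

theorem lcs_lower_bound_gadget {σ : Type*} (m d : ℕ) (hm : 1 ≤ m) (hd : 1 ≤ d)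
    (a b : ℕ → ℕ → GadgetSym σ) (atil btil : ℕ → σ)
    (ha : ∀ i, 1 ≤ i → i ≤ m → ∃ j, 1 ≤ j ∧ j ≤ d ∧ a i j = GadgetSym.letter (atil i) ∧
      ∀ j', 1 ≤ j' → j' ≤ d → j' ≠ j → a i j' = GadgetSym.star)
    (hb : ∀ i, 1 ≤ i → i ≤ m → ∃ j, 1 ≤ j ∧ j ≤ d ∧ b i j = GadgetSym.letter (btil i) ∧
      ∀ j', 1 ≤ j' → j' ≤ d → j' ≠ j → b i j' = GadgetSym.star) :
    ((∃ i j, 1 ≤ i ∧ i ≤ m ∧ 1 ≤ j ∧ j ≤ m ∧ atil i = btil j) →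
      ∃ W : List (GadgetSym σ), 20 * d + 1 ≤ W.length ∧
        W <:+: bigString a GadgetSym.hash m d ∧ W <:+: bigString b GadgetSym.dollar m d) ∧
    ((∃ W : List (GadgetSym σ), 11 * d ≤ W.length ∧
        W <:+: bigString a GadgetSym.hash m d ∧ W <:+: bigString b GadgetSym.dollar m d) →
      ∃ i j, 1 ≤ i ∧ i ≤ m ∧ 1 ≤ j ∧ j ≤ m ∧ atil i = btil j) := by
  constructor
  · rintro ⟨i, j, hi1, hi2, hj1, hj2, hij⟩
    obtain ⟨p, hp1, hpd, hap, hastar⟩ := ha i hi1 hi2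
    obtain ⟨q, hq1, hqd, hbq, hbstar⟩ := hb j hj1 hj2
    refine ⟨List.replicate (10 * d) GadgetSym.star ++ GadgetSym.letter (atil i) ::
      List.replicate (10 * d) GadgetSym.star, ?_, ?_, ?_⟩
    · simp only [List.length_append, List.length_cons, List.length_replicate]
      omega
    · have h1 := block_infix a GadgetSym.hash m d i hi1 hi2
      rw [block_eq a i d p (atil i) hp1 hpd hap hastar] at h1
      exact (mid_infix (atil i) d p hp1 hpd).trans h1
    · have h1 := block_infix b GadgetSym.dollar m d j hj1 hj2
      rw [block_eq b j d q (btil j) hq1 hqd hbq hbstar] at h1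
      rw [hij]
      exact (mid_infix (btil j) d q hq1 hqd).trans h1
  · rintro ⟨W, hlen, hWS, hWT⟩
    have hhash : ∀ k, GadgetSym.hash k ∉ W := by
      intro k hk
      rcases mem_bigString (hWT.subset hk) with h | ⟨i, j, hi1, hi2, hj1, hj2, h⟩ | ⟨i, h⟩
      · simp at h
      · obtain ⟨q, hq1, hqd, hbq, hbstar⟩ := hb i hi1 hi2
        by_cases hjq : j = q
        · rw [hjq, hbq] at h; simp at h
        · rw [hbstar j hj1 hj2 hjq] at h; simp at h
      · simp at h
    have hdollar : ∀ k, GadgetSym.dollar k ∉ W := by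
      intro k hk
      rcases mem_bigString (hWS.subset hk) with h | ⟨i, j, hi1, hi2, hj1, hj2, h⟩ | ⟨i, h⟩
      · simp at h
      · obtain ⟨p, hp1, hpd, hap, hastar⟩ := ha i hi1 hi2
        by_cases hjp : j = p
        · rw [hjp, hap] at h; simp at h
        · rw [hastar j hj1 hj2 hjp] at h; simp at h
      · simp at h
    obtain ⟨i, hi1, hi2, hWA⟩ := infix_bigString_block hm hhash hWS
    obtain ⟨p, hp1, hpd, hap, hastar⟩ := ha i hi1 hi2
    rw [block_eq a i d p (atil i) hp1 hpd hap hastar] at hWA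
    have hA := letter_mem_of_infix_block hd hp1 hpd hlen hWA
    obtain ⟨j, hj1, hj2, hWB⟩ := infix_bigString_block hm hdollar hWT
    obtain ⟨q, hq1, hqd, hbq, hbstar⟩ := hb j hj1 hj2
    rw [block_eq b j d q (btil j) hq1 hqd hbq hbstar] at hWB
    have hB := letter_mem_of_infix_block hd hq1 hqd hlen hWB
    rcases hB.2 _ hA.1 with h | h
    · simp at h
    · exact ⟨i, j, hi1, hi2, hj1, hj2, by simpa using h⟩
end

section
/- Let P be a string of length m, let T be a string of length n, and let k ∈ [1 .. m] be a threshold. Suppose there exist a positive integer d ≥ 2k and a primitive string Q with |Q| ≤ m/(8d) and δ_H(P, Q^*) = d. Then the number of k-mismatch occurrences of P in T, i.e., |{i ∈ [1 .. n−m+1] : δ_H(T[i .. i+m−1], P) ≤ k}|, is at most 12·(n/m)·d. -/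
/-- A length-`ℓ` string `Q` is *primitive* if it cannot be written as `W^t`
for a string `W` and an integer `t > 1`, i.e. no proper divisor of `ℓ` is a period. -/
def Primitive {α : Type*} (Q : ℕ → α) (ℓ : ℕ) : Prop :=
  ∀ p, 1 ≤ p → p < ℓ → p ∣ ℓ → ¬ IsPeriod Q ℓ p

/-- `δ_H(S, Q^*)`: the Hamming distance between the length-`len` string `S` and the
prefix of the same length of the infinite periodic extension `Q^* = QQQ⋯` of the
length-`ℓ` string `Q`. -/
noncomputable def hammingToPer {α : Type*} (S : ℕ → α) (len : ℕ) (Q : ℕ → α) (ℓ : ℕ) : ℕ :=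
  Set.ncard {t | 1 ≤ t ∧ t ≤ len ∧ S t ≠ Q ((t - 1) % ℓ + 1)}

open Finset

attribute [local instance] Classical.propDecidable

/-- The infinite periodic extension `Q^*`. -/
noncomputable def Qext {α : Type*} (Q : ℕ → α) (ℓ : ℕ) : ℕ → α := fun u => Q ((u - 1) % ℓ + 1)

lemma Qext_add_mul {α : Type*} (Q : ℕ → α) {ℓ : ℕ} (u c : ℕ) (hu : 1 ≤ u) :
    Qext Q ℓ (u + c * ℓ) = Qext Q ℓ u := by
  show Q _ = Q _
  congr 1
  have h1 : u + c * ℓ - 1 = (u - 1) + c * ℓ := by omega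
  rw [h1, Nat.add_mul_mod_self_right]

lemma Qext_congr {α : Type*} (Q : ℕ → α) {ℓ : ℕ} (u v : ℕ) (hu : 1 ≤ u) (hv : 1 ≤ v)
    (h : u % ℓ = v % ℓ) : Qext Q ℓ u = Qext Q ℓ v := by
  show Q _ = Q _
  congr 1
  have h3 : (u - 1) + 1 ≡ (v - 1) + 1 [MOD ℓ] := by
    rw [show (u-1)+1 = u by omega, show (v-1)+1 = v by omega]; exact h
  have := Nat.ModEq.add_right_cancel' 1 h3
  rw [this]

lemma Qext_eq_of_le {α : Type*} (Q : ℕ → α) {ℓ : ℕ} (t : ℕ) (h1 : 1 ≤ t) (h2 : t ≤ ℓ) :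
    Qext Q ℓ t = Q t := by
  show Q _ = Q _
  congr 1
  rw [Nat.mod_eq_of_lt (by omega)]
  omega

/-- `a` is a global period of `Q^*`. -/
def IsPer {α : Type*} (Q : ℕ → α) (ℓ a : ℕ) : Prop :=
  ∀ u, 1 ≤ u → Qext Q ℓ (u + a) = Qext Q ℓ u

lemma isPer_mul {α : Type*} {Q : ℕ → α} {ℓ a : ℕ} (h : IsPer Q ℓ a) :
    ∀ c u, 1 ≤ u → Qext Q ℓ (u + c * a) = Qext Q ℓ u := by
  intro c
  induction c with
  | zero => intro u hu; simp
  | succ c ih =>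
    intro u hu
    have h2 : u + (c+1) * a = (u + a) + c * a := by ring
    rw [h2, ih (u+a) (by omega), h u hu]

lemma isPer_gcd {α : Type*} {Q : ℕ → α} {ℓ : ℕ} :
    ∀ a b : ℕ, IsPer Q ℓ a → IsPer Q ℓ b → IsPer Q ℓ (Nat.gcd a b) := by
  intro a b
  refine Nat.gcd.induction a b (fun n _ hb => by simpa using hb) ?_
  intro m n hm ih hm' hn'
  rw [Nat.gcd_rec]
  refine ih ?_ hm'
  intro u hu
  calc Qext Q ℓ (u + n % m) = Qext Q ℓ (u + n % m + (n / m) * m) :=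
        (isPer_mul hm' (n/m) _ (by omega)).symm
    _ = Qext Q ℓ (u + n) := by rw [add_assoc, Nat.mod_add_div']
    _ = Qext Q ℓ u := hn' u hu

/-- Key primitivity lemma: if `p` is not a multiple of `ℓ`, each window of `ℓ`
consecutive positions contains a mismatch between `Q^*` and its shift by `p`. -/
lemma exists_mismatch {α : Type*} {Q : ℕ → α} {ℓ : ℕ} (hℓ : 1 ≤ ℓ)
    (hprim : Primitive Q ℓ) {p : ℕ} (hp : p % ℓ ≠ 0) (x : ℕ) (hx : 1 ≤ x) :
    ∃ u, x ≤ u ∧ u ≤ x + ℓ - 1 ∧ Qext Q ℓ u ≠ Qext Q ℓ (u + p) := by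
  by_contra hcon
  push_neg at hcon
  have hxl : x ≤ x * ℓ := Nat.le_mul_of_pos_right x (by omega)
  have hper : IsPer Q ℓ p := by
    intro u hu
    set w := u + x * ℓ - x with hw
    set u' := x + w % ℓ with hu'
    have hw1 : 1 ≤ w := by omega
    have hwmod : w % ℓ < ℓ := Nat.mod_lt _ (by omega)
    have hxw : x + w = u + x * ℓ := by omega
    have hcong : u' % ℓ = u % ℓ := by
      have e1 : u' ≡ x + w [MOD ℓ] := Nat.ModEq.add_left x (Nat.mod_modEq w ℓ)
      have e2 : (x + w) % ℓ = u % ℓ := by rw [hxw, Nat.add_mul_mod_self_right]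
      calc u' % ℓ = (x + w) % ℓ := e1
        _ = u % ℓ := e2
    have hcong' : (u' + p) % ℓ = (u + p) % ℓ := by
      have : u' ≡ u [MOD ℓ] := hcong
      exact this.add_right p
    have h1 : Qext Q ℓ (u + p) = Qext Q ℓ (u' + p) :=
      Qext_congr Q _ _ (by omega) (by omega) hcong'.symm
    have h2 : Qext Q ℓ u' = Qext Q ℓ (u' + p) := hcon u' (by omega) (by omega)
    have h3 : Qext Q ℓ u' = Qext Q ℓ u := Qext_congr Q _ _ (by omega) hu hcong
    rw [h1, ← h2, h3]
  have hperℓ : IsPer Q ℓ ℓ := by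
    intro u hu
    have := Qext_add_mul Q (ℓ := ℓ) u 1 hu
    simpa using this
  have hg := isPer_gcd p ℓ hper hperℓ
  set g := Nat.gcd p ℓ with hgdef
  have hgpos : 0 < g := Nat.gcd_pos_of_pos_right p (by omega)
  have hgdvd : g ∣ ℓ := Nat.gcd_dvd_right p ℓ
  have hgle : g ≤ ℓ := Nat.le_of_dvd (by omega) hgdvd
  have hglt : g < ℓ := by
    rcases lt_or_eq_of_le hgle with h | h
    · exact h
    · exfalso
      have hdl : ℓ ∣ p := h ▸ Nat.gcd_dvd_left p ℓ
      exact hp (Nat.eq_zero_of_dvd_of_lt hdl |> fun _ => (Nat.mod_eq_zero_of_dvd hdl))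
  refine hprim g hgpos hglt hgdvd ⟨hgpos, hgle, ?_⟩
  intro i hi hig
  have e1 : Qext Q ℓ i = Q i := Qext_eq_of_le Q i hi (by omega)
  have e2 : Qext Q ℓ (i + g) = Q (i + g) := Qext_eq_of_le Q (i+g) (by omega) hig
  rw [← e1, ← e2, hg i hi]

/-- Re-indexing a filtered window. -/
lemma card_filter_shift (i : ℕ) (hi : 1 ≤ i) (m : ℕ) (p : ℕ → Prop) :
    ((Icc i (i + m - 1)).filter fun x => p (x - i + 1)).card
      = ((Icc 1 m).filter p).card := by
  classical
  apply Finset.card_bij' (fun x _ => x - i + 1) (fun t _ => i + t - 1)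
  · intro x hx
    simp only [mem_filter, mem_Icc] at hx ⊢
    exact ⟨by omega, hx.2⟩
  · intro t ht
    simp only [mem_filter, mem_Icc] at ht ⊢
    refine ⟨by omega, ?_⟩
    rw [show i + t - 1 - i + 1 = t by omega]
    exact ht.2
  · intro x hx
    simp only [mem_filter, mem_Icc] at hx
    omega
  · intro t ht
    simp only [mem_filter, mem_Icc] at ht
    omega

/-- The mismatch set of the window of `T` at an occurrence against `Q^*` has size
at most `d + k`. -/
lemma B_card_le {α : Type*} (P T Q : ℕ → α) (m k d ℓ i : ℕ) (hi : 1 ≤ i)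
    (hM : ((Icc 1 m).filter fun t => P t ≠ Qext Q ℓ t).card = d)
    (hD : ((Icc 1 m).filter fun t => T (i + t - 1) ≠ P t).card ≤ k) :
    ((Icc i (i + m - 1)).filter fun x => T x ≠ Qext Q ℓ (x - i + 1)).card ≤ d + k := by
  classical
  have h2 : ((Icc i (i + m - 1)).filter fun x => T x ≠ Qext Q ℓ (x - i + 1)).card
      = ((Icc 1 m).filter fun t => T (i + t - 1) ≠ Qext Q ℓ t).card := by
    apply Finset.card_bij' (fun x _ => x - i + 1) (fun t _ => i + t - 1)
    · intro x hx
      simp only [mem_filter, mem_Icc] at hx ⊢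
      refine ⟨by omega, ?_⟩
      rw [show i + (x - i + 1) - 1 = x by omega]
      exact hx.2
    · intro t ht
      simp only [mem_filter, mem_Icc] at ht ⊢
      refine ⟨by omega, ?_⟩
      rw [show i + t - 1 - i + 1 = t by omega]
      exact ht.2
    · intro x hx
      simp only [mem_filter, mem_Icc] at hx
      omega
    · intro t ht
      simp only [mem_filter, mem_Icc] at ht
      omega
  rw [h2]
  have hsub : ((Icc 1 m).filter fun t => T (i + t - 1) ≠ Qext Q ℓ t)
      ⊆ ((Icc 1 m).filter fun t => T (i + t - 1) ≠ P t)
        ∪ ((Icc 1 m).filter fun t => P t ≠ Qext Q ℓ t) := by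
    intro t ht
    simp only [mem_filter, mem_union] at ht ⊢
    by_cases h : T (i + t - 1) = P t
    · exact Or.inr ⟨ht.1, by rw [← h]; exact ht.2⟩
    · exact Or.inl ⟨ht.1, h⟩
  calc ((Icc 1 m).filter fun t => T (i + t - 1) ≠ Qext Q ℓ t).card
      ≤ (((Icc 1 m).filter fun t => T (i + t - 1) ≠ P t)
        ∪ ((Icc 1 m).filter fun t => P t ≠ Qext Q ℓ t)).card := Finset.card_le_card hsub
    _ ≤ ((Icc 1 m).filter fun t => T (i + t - 1) ≠ P t).card
        + ((Icc 1 m).filter fun t => P t ≠ Qext Q ℓ t).card := Finset.card_union_le _ _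
    _ ≤ d + k := by omega

/-- Two nearby occurrences have the same phase modulo `ℓ`. -/
lemma phase_eq {α : Type*} (P T Q : ℕ → α) (m k d ℓ : ℕ)
    (hk : 1 ≤ k) (hd : 2 * k ≤ d) (hℓ : 1 ≤ ℓ) (hQlen : 8 * (d * ℓ) ≤ m)
    (hprim : Primitive Q ℓ)
    (hM : ((Icc 1 m).filter fun t => P t ≠ Qext Q ℓ t).card = d)
    {i j : ℕ} (hi : 1 ≤ i) (hij : i ≤ j)
    (hDi : ((Icc 1 m).filter fun t => T (i + t - 1) ≠ P t).card ≤ k)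
    (hDj : ((Icc 1 m).filter fun t => T (j + t - 1) ≠ P t).card ≤ k)
    (hgap : j + 4 * (d * ℓ) + 1 ≤ i + m) :
    (j - i) % ℓ = 0 := by
  classical
  by_contra hp
  set p := j - i with hpdef
  have hd2 : 2 ≤ d := by omega
  have hdl : d ≤ d * ℓ := Nat.le_mul_of_pos_right d (by omega)
  -- witness set of phase mismatches
  set Xs := (Icc 1 (4 * (d * ℓ))).filter (fun u => Qext Q ℓ u ≠ Qext Q ℓ (u + p)) with hXs
  have hwit := fun (s : ℕ) => exists_mismatch hℓ hprim hp (1 + s * ℓ) (by omega)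
  choose f hf1 hf2 hf3 using hwit
  have hcard : 4 * d ≤ Xs.card := by
    have hmap : ∀ s ∈ range (4 * d), f s ∈ Xs := by
      intro s hs
      simp only [mem_range] at hs
      have hb : s * ℓ + ℓ ≤ 4 * (d * ℓ) := by
        have h1 : (s + 1) * ℓ ≤ (4 * d) * ℓ := Nat.mul_le_mul_right ℓ (by omega)
        have h2 : (s + 1) * ℓ = s * ℓ + ℓ := by ring
        have h3 : (4 * d) * ℓ = 4 * (d * ℓ) := by ring
        omega
      simp only [hXs, mem_filter, mem_Icc]
      refine ⟨⟨by have := hf1 s; omega, ?_⟩, hf3 s⟩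
      have := hf2 s
      omega
    have hinj : Set.InjOn f (range (4 * d)) := by
      intro s hs s' hs' hss
      have key : ∀ t : ℕ, (f t - 1) / ℓ = t := by
        intro t
        apply Nat.div_eq_of_lt_le
        · have := hf1 t; exact Nat.le_sub_of_add_le (by omega)
        · have h1 := hf2 t
          have h2 : (t + 1) * ℓ = t * ℓ + ℓ := by ring
          have h3 := hf1 t
          have : f t - 1 < f t := by omega
          calc f t - 1 < f t := this
            _ ≤ (t + 1) * ℓ := by omega
      rw [← key s, ← key s', hss]
    calc 4 * d = (range (4 * d)).card := (card_range _).symm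
      _ ≤ Xs.card := Finset.card_le_card_of_injOn f hmap hinj
  -- map phase mismatches into the two mismatch sets
  have hmap2 : ∀ u ∈ Xs, u + j - 1 ∈
      ((Icc i (i + m - 1)).filter fun x => T x ≠ Qext Q ℓ (x - i + 1))
      ∪ ((Icc j (j + m - 1)).filter fun x => T x ≠ Qext Q ℓ (x - j + 1)) := by
    intro u hu
    simp only [hXs, mem_filter, mem_Icc] at hu
    obtain ⟨⟨hu1, hu2⟩, hune⟩ := hu
    have hmge : 4 * (d * ℓ) ≤ m := by omega
    set x := u + j - 1 with hx
    have e1 : x - j + 1 = u := by omega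
    have e2 : x - i + 1 = u + p := by omega
    by_cases hT : T x = Qext Q ℓ u
    · apply mem_union_left
      simp only [mem_filter, mem_Icc]
      refine ⟨⟨by omega, by omega⟩, ?_⟩
      rw [e2, hT]
      exact hune
    · apply mem_union_right
      simp only [mem_filter, mem_Icc]
      exact ⟨⟨by omega, by omega⟩, by rw [e1]; exact hT⟩
  have hinj2 : Set.InjOn (fun u => u + j - 1)
      (Xs : Set ℕ) := by
    intro a ha b hb hab
    simp only [hXs, coe_filter, Set.mem_setOf_eq, mem_Icc] at ha hb
    simp only at hab
    omega
  have hle : Xs.card ≤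
      (((Icc i (i + m - 1)).filter fun x => T x ≠ Qext Q ℓ (x - i + 1))
      ∪ ((Icc j (j + m - 1)).filter fun x => T x ≠ Qext Q ℓ (x - j + 1))).card :=
    Finset.card_le_card_of_injOn _ hmap2 hinj2
  have hBi := B_card_le P T Q m k d ℓ i hi hM hDi
  have hBj := B_card_le P T Q m k d ℓ j (by omega) hM hDj
  have := Finset.card_union_le
    ((Icc i (i + m - 1)).filter fun x => T x ≠ Qext Q ℓ (x - i + 1))
    ((Icc j (j + m - 1)).filter fun x => T x ≠ Qext Q ℓ (x - j + 1))
  omega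

/-- Any set of occurrences of small diameter has at most `6d` elements. -/
lemma block_bound {α : Type*} (P T Q : ℕ → α) (m k d ℓ : ℕ)
    (hk : 1 ≤ k) (hd : 2 * k ≤ d) (hℓ : 1 ≤ ℓ) (hQlen : 8 * (d * ℓ) ≤ m)
    (hprim : Primitive Q ℓ)
    (hM : ((Icc 1 m).filter fun t => P t ≠ Qext Q ℓ t).card = d)
    (S : Finset ℕ)
    (hS : ∀ i ∈ S, 1 ≤ i ∧ ((Icc 1 m).filter fun t => T (i + t - 1) ≠ P t).card ≤ k)
    (hdiam : ∀ i ∈ S, ∀ j ∈ S, i ≤ j → j + 4 * (d * ℓ) + 1 ≤ i + m) :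
    S.card ≤ 6 * d := by
  classical
  rcases S.eq_empty_or_nonempty with rfl | hne
  · simp
  have hd2 : 2 ≤ d := by omega
  have hdl : d ≤ d * ℓ := Nat.le_mul_of_pos_right d (by omega)
  set i0 := S.min' hne with hi0
  set jm := S.max' hne with hjm
  have hi0S : i0 ∈ S := S.min'_mem hne
  have hjmS : jm ∈ S := S.max'_mem hne
  have hi01 : 1 ≤ i0 := (hS i0 hi0S).1
  have hphase : ∀ j ∈ S, (j - i0) % ℓ = 0 := by
    intro j hj
    exact phase_eq P T Q m k d ℓ hk hd hℓ hQlen hprim hM hi01 (S.min'_le j hj)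
      (hS i0 hi0S).2 (hS j hj).2 (hdiam i0 hi0S j hj (S.min'_le j hj))
  -- the global mismatch set
  set Btot := (Icc i0 (jm + m - 1)).filter (fun x => T x ≠ Qext Q ℓ (x - i0 + 1)) with hBtot
  have hjmle : jm + 1 ≤ i0 + m := by
    have := hdiam i0 hi0S jm hjmS (S.min'_le jm hjmS)
    omega
  have hBtotcard : Btot.card ≤ 2 * (d + k) := by
    obtain ⟨c, hc⟩ : ∃ c, jm - i0 = c * ℓ :=
      ⟨(jm - i0) / ℓ, (Nat.div_mul_cancel (Nat.dvd_of_mod_eq_zero (hphase jm hjmS))).symm⟩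
    have hsub : Btot ⊆ ((Icc i0 (i0 + m - 1)).filter fun x => T x ≠ Qext Q ℓ (x - i0 + 1))
        ∪ ((Icc jm (jm + m - 1)).filter fun x => T x ≠ Qext Q ℓ (x - jm + 1)) := by
      intro x hx
      simp only [hBtot, mem_filter, mem_Icc] at hx
      obtain ⟨⟨hx1, hx2⟩, hxne⟩ := hx
      by_cases h : x ≤ i0 + m - 1
      · exact mem_union_left _ (by simp only [mem_filter, mem_Icc]; exact ⟨⟨hx1, h⟩, hxne⟩)
      · apply mem_union_right
        simp only [mem_filter, mem_Icc]
        have hxj : jm ≤ x := by omega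
        refine ⟨⟨hxj, by omega⟩, ?_⟩
        have : Qext Q ℓ (x - i0 + 1) = Qext Q ℓ (x - jm + 1) := by
          rw [show x - i0 + 1 = (x - jm + 1) + c * ℓ by omega]
          exact Qext_add_mul Q _ c (by omega)
        rw [← this]
        exact hxne
    have h1 := B_card_le P T Q m k d ℓ i0 hi01 hM (hS i0 hi0S).2
    have hi0jm : i0 ≤ jm := S.min'_le jm hjmS
    have h2 := B_card_le P T Q m k d ℓ jm (by omega) hM (hS jm hjmS).2
    have h3 := Finset.card_union_le
      ((Icc i0 (i0 + m - 1)).filter fun x => T x ≠ Qext Q ℓ (x - i0 + 1))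
      ((Icc jm (jm + m - 1)).filter fun x => T x ≠ Qext Q ℓ (x - jm + 1))
    have := Finset.card_le_card hsub
    omega
  -- witness sets
  set W : ℕ → Finset ℕ := fun j =>
    (Icc 1 m).filter (fun t => P t ≠ Qext Q ℓ t ∧ T (j + t - 1) ≠ Qext Q ℓ t) with hW
  have hWcard : ∀ j ∈ S, d ≤ (W j).card + k := by
    intro j hj
    have hsub : ((Icc 1 m).filter fun t => P t ≠ Qext Q ℓ t)
        ⊆ W j ∪ ((Icc 1 m).filter fun t => T (j + t - 1) ≠ P t) := by
      intro t ht
      simp only [mem_filter, hW, mem_union] at ht ⊢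
      by_cases h : T (j + t - 1) = Qext Q ℓ t
      · exact Or.inr ⟨ht.1, by rw [h]; exact fun he => ht.2 he.symm⟩
      · exact Or.inl ⟨ht.1, ht.2, h⟩
    have h1 := Finset.card_le_card hsub
    have h2 := Finset.card_union_le (W j) ((Icc 1 m).filter fun t => T (j + t - 1) ≠ P t)
    have h3 := (hS j hj).2
    omega
  -- pair counting
  set F : ℕ → Finset (ℕ × ℕ) := fun j => (W j).image (fun t => (t, j + t - 1)) with hF
  have hFinj : ∀ j : ℕ, Function.Injective (fun t => ((t, j + t - 1) : ℕ × ℕ)) := by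
    intro j a b hab
    exact (Prod.mk.injEq _ _ _ _ ▸ hab : _ ∧ _).1
  have hFcard : ∀ j, (F j).card = (W j).card := by
    intro j
    exact Finset.card_image_of_injective _ (hFinj j)
  have hdisj : ∀ x ∈ S, ∀ y ∈ S, x ≠ y → Disjoint (F x) (F y) := by
    intro x hx y hy hxy
    rw [Finset.disjoint_left]
    rintro ⟨t, z⟩ htz htz'
    simp only [hF, mem_image, Prod.mk.injEq] at htz htz'
    obtain ⟨a, ha, haa, hab⟩ := htz
    obtain ⟨b, hb, hba, hbb⟩ := htz'
    have ha1 : 1 ≤ a := by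
      simp only [hW, mem_filter, mem_Icc] at ha; omega
    omega
  have hsub2 : S.biUnion F ⊆ ((Icc 1 m).filter fun t => P t ≠ Qext Q ℓ t) ×ˢ Btot := by
    intro z hz
    simp only [mem_biUnion] at hz
    obtain ⟨j, hj, hzj⟩ := hz
    simp only [hF, mem_image] at hzj
    obtain ⟨t, ht, rfl⟩ := hzj
    simp only [hW, mem_filter, mem_Icc] at ht
    obtain ⟨⟨ht1, ht2⟩, hP, hT⟩ := ht
    rw [Finset.mem_product]
    constructor
    · simp only [mem_filter, mem_Icc]; exact ⟨⟨ht1, ht2⟩, hP⟩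
    · simp only [hBtot, mem_filter, mem_Icc]
      have hji : i0 ≤ j := S.min'_le j hj
      have hjjm : j ≤ jm := S.le_max' j hj
      obtain ⟨c, hc⟩ : ∃ c, j - i0 = c * ℓ :=
        ⟨(j - i0) / ℓ, (Nat.div_mul_cancel (Nat.dvd_of_mod_eq_zero (hphase j hj))).symm⟩
      refine ⟨⟨by omega, by omega⟩, ?_⟩
      have : Qext Q ℓ (j + t - 1 - i0 + 1) = Qext Q ℓ t := by
        rw [show j + t - 1 - i0 + 1 = t + c * ℓ by omega]
        exact Qext_add_mul Q t c ht1
      rw [this]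
      exact hT
  have hsum : S.card * (d - k) ≤ d * (2 * (d + k)) := by
    have h1 : S.card • (d - k) ≤ ∑ j ∈ S, (W j).card := by
      apply Finset.card_nsmul_le_sum
      intro j hj
      have := hWcard j hj
      omega
    have h2 : ∑ j ∈ S, (W j).card = (S.biUnion F).card := by
      rw [Finset.card_biUnion hdisj]
      exact (Finset.sum_congr rfl fun j _ => (hFcard j).symm)
    have h3 : (S.biUnion F).card ≤ d * Btot.card := by
      calc (S.biUnion F).card
          ≤ (((Icc 1 m).filter fun t => P t ≠ Qext Q ℓ t) ×ˢ Btot).card :=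
            Finset.card_le_card hsub2
        _ = d * Btot.card := by rw [Finset.card_product, hM]
    have h4 : d * Btot.card ≤ d * (2 * (d + k)) := Nat.mul_le_mul_left d hBtotcard
    have := smul_eq_mul (α := ℕ) S.card (d - k) ▸ h1
    omega
  -- conclude
  have hfinal : S.card * d ≤ (6 * d) * d := by
    calc S.card * d ≤ S.card * (2 * (d - k)) :=
          Nat.mul_le_mul_left S.card (by omega)
      _ = 2 * (S.card * (d - k)) := by ring
      _ ≤ 2 * (d * (2 * (d + k))) := Nat.mul_le_mul_left 2 hsum
      _ = d * (4 * (d + k)) := by ring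
      _ ≤ d * (6 * d) := Nat.mul_le_mul_left d (by omega)
      _ = (6 * d) * d := by ring
  exact Nat.le_of_mul_le_mul_right hfinal (by omega)

/-- **Bound on the number of `k`-mismatch occurrences** (Corollary 3.5 of CKW).
If there exist `d ≥ 2k` and a primitive string `Q` with `|Q| ≤ m/8d` and
`δ_H(P, Q^*) = d`, then the number of positions `i ∈ [1 .. n-m+1]` with
`δ_H(T[i .. i+m-1], P) ≤ k` is at most `12·(n/m)·d`. -/
theorem kmismatch_occurrences_bound {α : Type*} (P T : ℕ → α) (m n k d : ℕ)
    (hm : 1 ≤ m) (hk : 1 ≤ k) (hkm : k ≤ m) (hd : 2 * k ≤ d)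
    (Q : ℕ → α) (ℓ : ℕ) (hℓ : 1 ≤ ℓ) (hQlen : 8 * d * ℓ ≤ m)
    (hprim : Primitive Q ℓ) (hdist : hammingToPer P m Q ℓ = d) :
    (Set.ncard {i | 1 ≤ i ∧ i + m ≤ n + 1 ∧
        Set.ncard {t | 1 ≤ t ∧ t ≤ m ∧ T (i + t - 1) ≠ P t} ≤ k} : ℚ)
      ≤ 12 * ((n : ℚ) / (m : ℚ)) * (d : ℚ) := by
  classical
  rw [mul_assoc] at hQlen
  have hd2 : 2 ≤ d := by omega
  have hdl : d ≤ d * ℓ := Nat.le_mul_of_pos_right d (by omega)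
  have hM : ((Icc 1 m).filter fun t => P t ≠ Qext Q ℓ t).card = d := by
    rw [← hdist]
    unfold hammingToPer
    rw [show {t | 1 ≤ t ∧ t ≤ m ∧ P t ≠ Q ((t - 1) % ℓ + 1)}
        = (((Icc 1 m).filter fun t => P t ≠ Qext Q ℓ t) : Set ℕ) from ?_]
    · rw [Set.ncard_coe_finset]
    · ext t
      simp only [Set.mem_setOf_eq, coe_filter, mem_Icc, Qext]
      exact ⟨fun h => Finset.mem_filter.2 ⟨Finset.mem_Icc.2 ⟨h.1, h.2.1⟩, h.2.2⟩, fun h => ⟨(Finset.mem_Icc.1 (Finset.mem_filter.1 h).1).1, (Finset.mem_Icc.1 (Finset.mem_filter.1 h).1).2, (Finset.mem_filter.1 h).2⟩⟩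
  have hOccEq : ∀ i, Set.ncard {t | 1 ≤ t ∧ t ≤ m ∧ T (i + t - 1) ≠ P t}
      = ((Icc 1 m).filter fun t => T (i + t - 1) ≠ P t).card := by
    intro i
    rw [show {t | 1 ≤ t ∧ t ≤ m ∧ T (i + t - 1) ≠ P t}
        = (((Icc 1 m).filter fun t => T (i + t - 1) ≠ P t) : Set ℕ) from ?_]
    · rw [Set.ncard_coe_finset]
    · ext t
      simp only [Set.mem_setOf_eq, coe_filter, mem_Icc]
      tauto
  rcases lt_or_ge n m with hnm | hmn
  · have hempty : {i | 1 ≤ i ∧ i + m ≤ n + 1 ∧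
        Set.ncard {t | 1 ≤ t ∧ t ≤ m ∧ T (i + t - 1) ≠ P t} ≤ k} = ∅ := by
      ext i
      simp only [Set.mem_setOf_eq, Set.mem_empty_iff_false, iff_false]
      rintro ⟨h1, h2, -⟩
      omega
    rw [hempty]
    simp only [Set.ncard_empty, Nat.cast_zero]
    positivity
  · set N := n - m + 1 with hN
    set hh := m - 4 * (d * ℓ) with hhh
    have hhh1 : 1 ≤ hh := by omega
    have hhh2 : m ≤ 2 * hh := by omega
    have hhhm : hh ≤ m := by omega
    set OccF := (Icc 1 N).filter
      (fun i => ((Icc 1 m).filter fun t => T (i + t - 1) ≠ P t).card ≤ k) with hOccF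
    have hseteq : {i | 1 ≤ i ∧ i + m ≤ n + 1 ∧
        Set.ncard {t | 1 ≤ t ∧ t ≤ m ∧ T (i + t - 1) ≠ P t} ≤ k} = (OccF : Set ℕ) := by
      ext i
      simp only [Set.mem_setOf_eq, hOccF, coe_filter, mem_Icc, hOccEq i]
      constructor
      · rintro ⟨h1, h2, h3⟩; exact ⟨⟨h1, by omega⟩, h3⟩
      · rintro ⟨⟨h1, h2⟩, h3⟩; exact ⟨h1, by omega, h3⟩
    rw [hseteq, Set.ncard_coe_finset]
    set Bn := (N - 1) / hh + 1 with hBn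
    -- block decomposition
    have hcover : OccF ⊆ (range Bn).biUnion
        (fun b => OccF.filter (fun i => (i - 1) / hh = b)) := by
      intro i hi
      have hiN : i ∈ Icc 1 N := mem_of_mem_filter i hi
      simp only [mem_Icc] at hiN
      apply mem_biUnion.2
      refine ⟨(i - 1) / hh, ?_, mem_filter.2 ⟨hi, rfl⟩⟩
      rw [mem_range, hBn]
      have : (i - 1) / hh ≤ (N - 1) / hh := Nat.div_le_div_right (by omega)
      omega
    have hblock : ∀ b, (OccF.filter (fun i => (i - 1) / hh = b)).card ≤ 6 * d := by
      intro b
      apply block_bound P T Q m k d ℓ hk hd hℓ hQlen hprim hM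
      · intro i hi
        simp only [mem_filter, mem_Icc, hOccF] at hi
        exact ⟨hi.1.1.1, hi.1.2⟩
      · intro i hi j hj hij
        simp only [mem_filter, mem_Icc, hOccF] at hi hj
        have hib : (i - 1) / hh = b := hi.2
        have hjb : (j - 1) / hh = b := hj.2
        have Ei : hh * b + (i - 1) % hh = i - 1 := by
          rw [← hib]; exact Nat.div_add_mod _ _
        have Ej : hh * b + (j - 1) % hh = j - 1 := by
          rw [← hjb]; exact Nat.div_add_mod _ _
        have hm1 : (i - 1) % hh < hh := Nat.mod_lt _ (by omega)
        have hm2 : (j - 1) % hh < hh := Nat.mod_lt _ (by omega)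
        have hi1 : 1 ≤ i := hi.1.1.1
        omega
    have hcard : OccF.card ≤ Bn * (6 * d) := by
      calc OccF.card ≤ ((range Bn).biUnion
            (fun b => OccF.filter (fun i => (i - 1) / hh = b))).card :=
            Finset.card_le_card hcover
        _ ≤ ∑ b ∈ range Bn, (OccF.filter (fun i => (i - 1) / hh = b)).card :=
            Finset.card_biUnion_le
        _ ≤ ∑ _b ∈ range Bn, 6 * d := Finset.sum_le_sum (fun b _ => hblock b)
        _ = Bn * (6 * d) := by rw [Finset.sum_const, card_range, smul_eq_mul]
    -- arithmetic
    have hBnm : Bn * m ≤ 2 * n := by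
      have h1 : ((N - 1) / hh) * hh ≤ N - 1 := Nat.div_mul_le_self _ _
      have h2 : Bn * hh = ((N - 1) / hh) * hh + hh := by rw [hBn]; ring
      have h3 : Bn * hh ≤ n := by omega
      have h4 : Bn * m ≤ Bn * (2 * hh) := Nat.mul_le_mul_left Bn hhh2
      have h5 : Bn * (2 * hh) = 2 * (Bn * hh) := by ring
      have h6 : N ≤ n := by omega
      omega
    have hm0 : (0 : ℚ) < (m : ℚ) := by exact_mod_cast hm
    rw [show (12 : ℚ) * ((n : ℚ) / (m : ℚ)) * (d : ℚ) = (12 * n * d) / m by ring,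
      le_div_iff₀ hm0]
    have c1 : (OccF.card : ℚ) ≤ (Bn : ℚ) * (6 * d) := by exact_mod_cast hcard
    have c2 : (Bn : ℚ) * m ≤ 2 * n := by exact_mod_cast hBnm
    have c3 : (0 : ℚ) ≤ (d : ℚ) := by positivity
    nlinarith [c1, c2, c3, hm0]
end

section
/- Let P be a string of length m, let T be a string, let k be a positive integer, and let R_1 = P[a_1 .. b_1], …, R_r = P[a_r .. b_r] be pairwise disjoint fragments of P with total length Σ_{i=1}^{r} |R_i| ≥ (3/8)·m. Suppose π is a position with δ_H(T[π .. π+m−1], P) ≤ k. For each i, let δ_H^π(R_i) = |{j ∈ [a_i .. b_i] : T[π + j − 1] ≠ P[j]}| be the number of mismatches located inside fragment R_i, and let I_π = {i ∈ [1 .. r] : δ_H^π(R_i) ≤ ⌊(4k/m)·|R_i|⌋}. Then Σ_{i ∈ I_π} |R_i| ≥ m/16. -/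
open scoped Classical

/-- **Many repetitive regions receive few mismatches.**  Let `P` be a string of length `m`,
let `R_i = P[a i .. b i]` (`i ∈ [1 .. r]`) be pairwise disjoint fragments of `P` of total
length at least `(3/8)·m`, and suppose `δ_H(T[π .. π+m-1], P) ≤ k`.  Let `I_π` be the set
of indices `i` such that the number of mismatches located inside `R_i` is at most
`⌊(4k/m)·|R_i|⌋`.  Then `Σ_{i ∈ I_π} |R_i| ≥ m/16`. -/
theorem repetitive_regions_light_total_length {α : Type*} (P T : ℕ → α)
    (m k r π : ℕ) (hm : 1 ≤ m) (hk : 1 ≤ k) (hπ : 1 ≤ π)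
    (a b : ℕ → ℕ)
    (hfrag : ∀ i, 1 ≤ i → i ≤ r → 1 ≤ a i ∧ a i ≤ b i ∧ b i ≤ m)
    (hdisj : ∀ i i', 1 ≤ i → i ≤ r → 1 ≤ i' → i' ≤ r → i ≠ i' →
      b i < a i' ∨ b i' < a i)
    (htotal : 3 * m ≤ 8 * ∑ i ∈ Finset.Icc 1 r, (b i - a i + 1))
    (hocc : Set.ncard {t | 1 ≤ t ∧ t ≤ m ∧ T (π + t - 1) ≠ P t} ≤ k) :
    m ≤ 16 * ∑ i ∈ (Finset.Icc 1 r).filter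
        (fun i => Set.ncard {j | a i ≤ j ∧ j ≤ b i ∧ T (π + j - 1) ≠ P j} ≤
          4 * k * (b i - a i + 1) / m),
      (b i - a i + 1) := by
  classical
  set msf : ℕ → Finset ℕ :=
    fun i => (Finset.Icc (a i) (b i)).filter (fun j => T (π + j - 1) ≠ P j) with hmsf
  have hset : ∀ i, {j | a i ≤ j ∧ j ≤ b i ∧ T (π + j - 1) ≠ P j} = ↑(msf i) := by
    intro i
    ext j
    simp [hmsf, Finset.mem_Icc, and_assoc]
  have hncard : ∀ i, Set.ncard {j | a i ≤ j ∧ j ≤ b i ∧ T (π + j - 1) ≠ P j} = (msf i).card := by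
    intro i; rw [hset i, Set.ncard_coe_finset]
  set G : Finset ℕ := (Finset.Icc 1 m).filter (fun t => T (π + t - 1) ≠ P t) with hG
  have hGcard : G.card ≤ k := by
    have : {t | 1 ≤ t ∧ t ≤ m ∧ T (π + t - 1) ≠ P t} = ↑G := by
      ext t; simp [hG, Finset.mem_Icc, and_assoc]
    rwa [this, Set.ncard_coe_finset] at hocc
  set cond : ℕ → Prop := fun i =>
    Set.ncard {j | a i ≤ j ∧ j ≤ b i ∧ T (π + j - 1) ≠ P j} ≤
      4 * k * (b i - a i + 1) / m with hcond
  set H : Finset ℕ := (Finset.Icc 1 r).filter (fun i => ¬ cond i) with hH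
  set L : Finset ℕ := (Finset.Icc 1 r).filter (fun i => cond i) with hL
  -- msf i are pairwise disjoint on H, all subsets of G
  have hsub : ∀ i ∈ H, msf i ⊆ G := by
    intro i hi
    have hir : 1 ≤ i ∧ i ≤ r := by
      have := (Finset.mem_filter.mp hi).1; simpa [Finset.mem_Icc] using this
    obtain ⟨h1, h2, h3⟩ := hfrag i hir.1 hir.2
    intro j hj
    simp only [hmsf, Finset.mem_filter, Finset.mem_Icc] at hj
    simp only [hG, Finset.mem_filter, Finset.mem_Icc]
    exact ⟨⟨le_trans h1 hj.1.1, le_trans hj.1.2 h3⟩, hj.2⟩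
  have hpair : ∀ i ∈ H, ∀ i' ∈ H, i ≠ i' → Disjoint (msf i) (msf i') := by
    intro i hi i' hi' hne
    have hir : 1 ≤ i ∧ i ≤ r := by
      have := (Finset.mem_filter.mp hi).1; simpa [Finset.mem_Icc] using this
    have hir' : 1 ≤ i' ∧ i' ≤ r := by
      have := (Finset.mem_filter.mp hi').1; simpa [Finset.mem_Icc] using this
    have hd := hdisj i i' hir.1 hir.2 hir'.1 hir'.2 hne
    rw [Finset.disjoint_left]
    intro x hx hx'
    simp only [hmsf, Finset.mem_filter, Finset.mem_Icc] at hx hx'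
    omega
  -- total mismatches in heavy fragments ≤ k
  have hsumk : ∑ i ∈ H, (msf i).card ≤ k := by
    calc ∑ i ∈ H, (msf i).card = (H.biUnion msf).card :=
          (Finset.card_biUnion hpair).symm
      _ ≤ G.card := Finset.card_le_card (by
          intro x hx
          rcases Finset.mem_biUnion.mp hx with ⟨i, hi, hxi⟩
          exact hsub i hi hxi)
      _ ≤ k := hGcard
  -- heavy fragments have many mismatches
  have hheavy : ∀ i ∈ H, 4 * k * (b i - a i + 1) + 1 ≤ (msf i).card * m := by
    intro i hi
    have hc : ¬ cond i := (Finset.mem_filter.mp hi).2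
    rw [hcond] at hc
    simp only [hncard] at hc
    push_neg at hc
    have := (Nat.div_lt_iff_lt_mul (by omega : 0 < m)).mp hc
    omega
  have hsumheavy : 4 * k * (∑ i ∈ H, (b i - a i + 1)) ≤ k * m := by
    calc 4 * k * (∑ i ∈ H, (b i - a i + 1)) = ∑ i ∈ H, 4 * k * (b i - a i + 1) := by
          rw [Finset.mul_sum]
      _ ≤ ∑ i ∈ H, (msf i).card * m := by
          apply Finset.sum_le_sum; intro i hi; have := hheavy i hi; omega
      _ = (∑ i ∈ H, (msf i).card) * m := by rw [Finset.sum_mul]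
      _ ≤ k * m := Nat.mul_le_mul_right m hsumk
  have hLH : 4 * (∑ i ∈ H, (b i - a i + 1)) ≤ m := by
    have : k * (4 * (∑ i ∈ H, (b i - a i + 1))) ≤ k * m := by
      calc k * (4 * (∑ i ∈ H, (b i - a i + 1)))
          = 4 * k * (∑ i ∈ H, (b i - a i + 1)) := by ring
        _ ≤ k * m := hsumheavy
    exact Nat.le_of_mul_le_mul_left this (by omega)
  have hsplit : (∑ i ∈ L, (b i - a i + 1)) + (∑ i ∈ H, (b i - a i + 1)) =
      ∑ i ∈ Finset.Icc 1 r, (b i - a i + 1) := by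
    rw [hL, hH]
    exact Finset.sum_filter_add_sum_filter_not _ _ _
  have : 3 * m ≤ 8 * ((∑ i ∈ L, (b i - a i + 1)) + (∑ i ∈ H, (b i - a i + 1))) := by
    rw [hsplit]; exact htotal
  omega
end

section
/- Let S_1 and S_2 be strings over an alphabet Σ, let $ be a symbol not in Σ, let T = S_1 $ S_2 be their concatenation separated by $, and let N = |T|. Let d ≥ 100 be an integer threshold and set τ = ⌊d/3⌋. Let A be any τ-synchronizing set of T, and let B ⊆ [1 .. N] be the set defined as follows: for every τ-run T[l .. r] (a run of length r − l + 1 ≥ 3τ − 1 with period p = per(T[l .. r]) ≤ τ/3), let P be the Lyndon root of T[l .. r] (the lexicographically minimal rotation of T[l .. l+p−1]), let i^{(b)} and i^{(e)} be respectively the first and last positions of occurrences of P that lie entirely within T[l .. r], and put i^{(b)}, i^{(b)} + p, and i^{(e)} into B. Suppose S_1 and S_2 have a common substring of length d, and among all pairs (i_1, i_2) with S_1[i_1 .. i_1+d−1] = S_2[i_2 .. i_2+d−1], choose one minimizing i_1 + i_2. Then this common substring is anchored by A ∪ B, i.e., there exists a shift h ∈ [0 .. d−1] such that both i_1 + h ∈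 A ∪ B and |S_1| + 1 + i_2 + h ∈ A ∪ B. -/
/-- `per(T[l .. r])`: the minimal period of the substring `T[l .. r]`. -/
noncomputable def subPer {α : Type*} (T : ℕ → α) (l r : ℕ) : ℕ :=
  minPer (fun t => T (l + t - 1)) (r - l + 1)

/-- `A` is a `τ`-synchronizing set of the length-`N` string `T`:
`A ⊆ [1 .. N-2τ+1]`, and it satisfies the consistency and density conditions. -/
def IsSyncSet {α : Type*} (T : ℕ → α) (N τ : ℕ) (A : Set ℕ) : Prop :=
  (∀ i ∈ A, 1 ≤ i ∧ i + 2 * τ ≤ N + 1) ∧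
  (∀ i j, 1 ≤ i → i + 2 * τ ≤ N + 1 → 1 ≤ j → j + 2 * τ ≤ N + 1 →
    (∀ t, 1 ≤ t → t ≤ 2 * τ → T (i + t - 1) = T (j + t - 1)) → (i ∈ A ↔ j ∈ A)) ∧
  (∀ i, 1 ≤ i → i + 3 * τ ≤ N + 2 →
    (A ∩ Set.Icc i (i + τ - 1) = ∅ ↔ subPer T i (i + 3 * τ - 2) ≤ τ / 3))

/-- `T[l .. r]` is a *run* in the length-`N` string `T`: a periodic substring
(`2·per ≤ length`) that cannot be extended to the left or to the right without an
increase of its shortest period. -/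
def IsRun {α : Type*} (T : ℕ → α) (N l r : ℕ) : Prop :=
  1 ≤ l ∧ l ≤ r ∧ r ≤ N ∧ 2 * subPer T l r ≤ r - l + 1 ∧
    (l = 1 ∨ T (l - 1) ≠ T (l - 1 + subPer T l r)) ∧
    (r = N ∨ T (r + 1) ≠ T (r + 1 - subPer T l r))

/-- `T[l .. r]` is a `τ`-*run*: a run of length at least `3τ - 1` with period at most `τ/3`. -/
def IsTauRun {α : Type*} (T : ℕ → α) (N τ l r : ℕ) : Prop :=
  IsRun T N l r ∧ 3 * τ ≤ r - l + 2 ∧ subPer T l r ≤ τ / 3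

/-- The rotation by `s` of the length-`p` string `T[l .. l+p-1]`:
its `t`-th symbol is `T[l + ((t - 1 + s) mod p)]`. -/
def rotStr {α : Type*} (T : ℕ → α) (l p s : ℕ) : ℕ → α :=
  fun t => T (l + (t - 1 + s) % p)

/-- Lexicographic comparison of two length-`p` strings: `x ⪯ y` iff `x = y` or `x` is
strictly smaller at the first position where they differ. -/
def LexLE {α : Type*} [LinearOrder α] (x y : ℕ → α) (p : ℕ) : Prop :=
  (∀ t, 1 ≤ t → t ≤ p → x t = y t) ∨
    ∃ t, 1 ≤ t ∧ t ≤ p ∧ (∀ t', 1 ≤ t' → t' < t → x t' = y t') ∧ x t < y t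

/-- The set of starting positions of occurrences of the rotation `rotStr T l p s`
(where `p = per(T[l .. r])`) that lie entirely inside `T[l .. r]`. -/
def occSet {α : Type*} (T : ℕ → α) (l r s : ℕ) : Set ℕ :=
  {q | l ≤ q ∧ q + subPer T l r ≤ r + 1 ∧
    ∀ t, 1 ≤ t → t ≤ subPer T l r → T (q + t - 1) = rotStr T l (subPer T l r) s t}

/-- The anchor set `B`: for every `τ`-run `T[l .. r]` with period `p`, letting `P` be the
Lyndon root (the lexicographically minimal rotation of `T[l .. l+p-1]`), and letting
`i^{(b)}` and `i^{(e)}` be the first and last occurrences of `P` inside `T[l .. r]`,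
the positions `i^{(b)}`, `i^{(b)} + p` and `i^{(e)}` are placed in `B`. -/
def anchorB {α : Type*} [LinearOrder α] (T : ℕ → α) (N τ : ℕ) : Set ℕ :=
  {x | ∃ l r, IsTauRun T N τ l r ∧
    ∃ s, s < subPer T l r ∧
      (∀ s', s' < subPer T l r →
        LexLE (rotStr T l (subPer T l r) s) (rotStr T l (subPer T l r) s') (subPer T l r)) ∧
      (x = sInf (occSet T l r s) ∨ x = sInf (occSet T l r s) + subPer T l r ∨
        x = sSup (occSet T l r s))}

section LexHelpers
variable {β : Type*} [LinearOrder β]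

lemma lexLE_refl (x : ℕ → β) (p : ℕ) : LexLE x x p := Or.inl (fun _ _ _ => rfl)

lemma lexLE_congr {x x' y y' : ℕ → β} {p : ℕ}
    (hx : ∀ t, 1 ≤ t → t ≤ p → x t = x' t) (hy : ∀ t, 1 ≤ t → t ≤ p → y t = y' t) :
    LexLE x y p → LexLE x' y' p := by
  rintro (h | ⟨t, ht1, htp, hpre, hlt⟩)
  · exact Or.inl fun t h1 h2 => (hx t h1 h2).symm.trans ((h t h1 h2).trans (hy t h1 h2))
  · exact Or.inr ⟨t, ht1, htp,
      fun t' h1 h2 => (hx t' h1 (le_trans (le_of_lt h2) htp)).symm.trans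
        ((hpre t' h1 h2).trans (hy t' h1 (le_trans (le_of_lt h2) htp))),
      by rw [← hx t ht1 htp, ← hy t ht1 htp]; exact hlt⟩

lemma lexLE_total (x y : ℕ → β) (p : ℕ) : LexLE x y p ∨ LexLE y x p := by
  classical
  by_cases hall : ∀ t, 1 ≤ t → t ≤ p → x t = y t
  · exact Or.inl (Or.inl hall)
  push_neg at hall
  have hQ : ∃ t, 1 ≤ t ∧ t ≤ p ∧ x t ≠ y t := hall
  have h0 := Nat.find_spec hQ
  have hpre : ∀ t', 1 ≤ t' → t' < Nat.find hQ → x t' = y t' := by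
    intro t' h1 h2
    by_contra hne
    exact Nat.find_min hQ h2 ⟨h1, le_trans (le_of_lt (lt_of_lt_of_le h2 h0.2.1)) le_rfl, hne⟩
  rcases lt_trichotomy (x (Nat.find hQ)) (y (Nat.find hQ)) with hlt | heq | hgt
  · exact Or.inl (Or.inr ⟨Nat.find hQ, h0.1, h0.2.1, hpre, hlt⟩)
  · exact absurd heq h0.2.2
  · exact Or.inr (Or.inr ⟨Nat.find hQ, h0.1, h0.2.1,
      fun t' a b => (hpre t' a b).symm, hgt⟩)

lemma lexLE_trans {x y z : ℕ → β} {p : ℕ} :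
    LexLE x y p → LexLE y z p → LexLE x z p := by
  rintro (hxy | ⟨t₁, h11, h1p, hpre1, hlt1⟩) (hyz | ⟨t₂, h21, h2p, hpre2, hlt2⟩)
  · exact Or.inl fun t a b => (hxy t a b).trans (hyz t a b)
  · exact Or.inr ⟨t₂, h21, h2p,
      fun t' a b => (hxy t' a (le_trans (le_of_lt b) h2p)).trans (hpre2 t' a b),
      by rw [hxy t₂ h21 h2p]; exact hlt2⟩
  · exact Or.inr ⟨t₁, h11, h1p,
      fun t' a b => (hpre1 t' a b).trans (hyz t' a (le_trans (le_of_lt b) h1p)),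
      lt_of_lt_of_le hlt1 (le_of_eq (hyz t₁ h11 h1p))⟩
  · rcases lt_trichotomy t₁ t₂ with hlt | heq | hgt
    · exact Or.inr ⟨t₁, h11, h1p,
        fun t' a b => (hpre1 t' a b).trans (hpre2 t' a (lt_trans b hlt)),
        lt_of_lt_of_le hlt1 (le_of_eq (hpre2 t₁ h11 hlt))⟩
    · subst heq
      exact Or.inr ⟨t₁, h11, h1p, fun t' a b => (hpre1 t' a b).trans (hpre2 t' a b),
        lt_trans hlt1 hlt2⟩
    · exact Or.inr ⟨t₂, h21, h2p,
        fun t' a b => (hpre1 t' a (lt_trans b hgt)).trans (hpre2 t' a b),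
        lt_of_le_of_lt (le_of_eq (hpre1 t₂ h21 hgt)) hlt2⟩

/-- existence of a LexLE-minimal element among `F 0, …, F (n-1)`. -/
lemma exists_lexLE_min (F : ℕ → ℕ → β) (p : ℕ) :
    ∀ n, 0 < n → ∃ σ, σ < n ∧ ∀ σ', σ' < n → LexLE (F σ) (F σ') p := by
  intro n
  induction n with
  | zero => intro h; exact absurd h (by omega)
  | succ m ih =>
    intro _
    rcases Nat.eq_zero_or_pos m with hm | hm
    · subst hm
      exact ⟨0, by omega, by
        intro σ' hσ'
        have : σ' = 0 := by omega
        subst this; exact lexLE_refl _ _⟩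
    · obtain ⟨σ, hσ, hminσ⟩ := ih hm
      rcases lexLE_total (F σ) (F m) p with h | h
      · refine ⟨σ, by omega, ?_⟩
        intro σ' hσ'
        rcases Nat.lt_succ_iff_lt_or_eq.mp hσ' with h' | h'
        · exact hminσ σ' h'
        · subst h'; exact h
      · refine ⟨m, by omega, ?_⟩
        intro σ' hσ'
        rcases Nat.lt_succ_iff_lt_or_eq.mp hσ' with h' | h'
        · exact lexLE_trans h (hminσ σ' h')
        · subst h'; exact lexLE_refl _ _

end LexHelpers

section PerHelpers
variable {β : Type*}

lemma isPeriod_congr {S S' : ℕ → β} {n p : ℕ}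
    (h : ∀ t, 1 ≤ t → t ≤ n → S t = S' t) :
    IsPeriod S n p ↔ IsPeriod S' n p := by
  unfold IsPeriod
  constructor <;> rintro ⟨h1, h2, h3⟩ <;> refine ⟨h1, h2, fun i hi hip => ?_⟩
  · rw [← h i hi (by omega), ← h (i + p) (by omega) hip]; exact h3 i hi hip
  · rw [h i hi (by omega), h (i + p) (by omega) hip]; exact h3 i hi hip

lemma minPer_congr {S S' : ℕ → β} {n : ℕ}
    (h : ∀ t, 1 ≤ t → t ≤ n → S t = S' t) : minPer S n = minPer S' n := by
  unfold minPer
  congr 1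
  ext p
  exact isPeriod_congr h

lemma isPeriod_self_s15 (S : ℕ → β) {n : ℕ} (hn : 1 ≤ n) : IsPeriod S n n :=
  ⟨hn, le_rfl, fun i hi hip => by omega⟩

lemma minPer_isPeriod (S : ℕ → β) {n : ℕ} (hn : 1 ≤ n) : IsPeriod S n (minPer S n) := by
  have : n ∈ {p | IsPeriod S n p} := isPeriod_self_s15 S hn
  exact Nat.sInf_mem ⟨n, this⟩

lemma minPer_min (S : ℕ → β) {n q : ℕ} (hq : q < minPer S n) : ¬ IsPeriod S n q :=
  Nat.notMem_of_lt_sInf hq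

lemma minPer_le (S : ℕ → β) {n p : ℕ} (hp : IsPeriod S n p) : minPer S n ≤ p :=
  Nat.sInf_le hp

end PerHelpers

section ModHelpers

/-- two numbers congruent mod p within a window of length `2p` differ by `0` or `p`. -/
lemma mod_resolve {p a b : ℕ} (hp : 0 < p) (h : a % p = b % p)
    (h1 : b < a + p) (h2 : a < b + 2 * p) : a = b ∨ a = b + p := by
  rcases le_total a b with hab | hab
  · left
    have hd : p ∣ b - a := (Nat.modEq_iff_dvd' hab).mp h
    rcases hd with ⟨c, hc⟩
    rcases Nat.eq_zero_or_pos c with h0 | h0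
    · subst h0; simp at hc; omega
    · have : p ≤ p * c := Nat.le_mul_of_pos_right p h0
      omega
  · have hd : p ∣ a - b := (Nat.modEq_iff_dvd' hab).mp h.symm
    rcases hd with ⟨c, hc⟩
    have hc2 : c < 2 := by
      by_contra hge
      push_neg at hge
      have : p * 2 ≤ p * c := Nat.mul_le_mul_left p hge
      omega
    interval_cases c <;> omega

/-- Bezout: some multiple of `e` is congruent to `gcd e p` mod `p`. -/
lemma exists_mul_mod_gcd (e p : ℕ) (hp : 0 < p) :
    ∃ k : ℕ, (k * e) % p = (Nat.gcd e p) % p := by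
  have hb := Nat.gcd_eq_gcd_ab e p
  set x := Nat.gcdA e p with hxdef
  set y := Nat.gcdB e p with hydef
  have hpz : (p : ℤ) ≠ 0 := by exact_mod_cast hp.ne'
  refine ⟨(x % (p : ℤ)).toNat, ?_⟩
  have hnn : 0 ≤ x % (p : ℤ) := Int.emod_nonneg x hpz
  have hk' : (((x % (p : ℤ)).toNat : ℤ)) = x - (p : ℤ) * (x / p) := by
    rw [Int.toNat_of_nonneg hnn, Int.emod_def]
  have : ((x % (p : ℤ)).toNat * e) ≡ Nat.gcd e p [MOD p] := by
    rw [Nat.modEq_iff_dvd]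
    refine ⟨y + (x / p) * e, ?_⟩
    push_cast
    rw [hk', hb]
    ring
  exact this

end ModHelpers


section RunTheory
variable {β : Type*} [LinearOrder β] (T : ℕ → β)

lemma run_rep {l r p : ℕ} (hp : 0 < p)
    (hPer : ∀ y, l ≤ y → y + p ≤ r → T y = T (y + p)) :
    ∀ x, l ≤ x → x ≤ r → T x = T (l + (x - l) % p) := by
  have aux : ∀ q rem, rem < p → l + (p * q + rem) ≤ r → T (l + (p * q + rem)) = T (l + rem) := by
    intro q
    induction q with
    | zero => intro rem _ _; simp
    | succ m ih =>
      intro rem hrem hle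
      have hpm : p * (m + 1) = p * m + p := by ring
      have h1 : T (l + (p * m + rem)) = T ((l + (p * m + rem)) + p) :=
        hPer _ (by omega) (by omega)
      have h2 : (l + (p * m + rem)) + p = l + (p * (m + 1) + rem) := by ring
      rw [h2] at h1
      rw [← h1]
      exact ih rem hrem (by omega)
  intro x hlx hxr
  have hx : x = l + (p * ((x - l) / p) + (x - l) % p) := by
    have := Nat.div_add_mod (x - l) p
    omega
  calc T x = T (l + (p * ((x - l) / p) + (x - l) % p)) := by rw [← hx]
    _ = T (l + (x - l) % p) := aux _ _ (Nat.mod_lt _ hp) (by omega)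

lemma run_mod {l r p : ℕ} (hp : 0 < p)
    (hPer : ∀ y, l ≤ y → y + p ≤ r → T y = T (y + p))
    {x y : ℕ} (hx1 : l ≤ x) (hx2 : x ≤ r) (hy1 : l ≤ y) (hy2 : y ≤ r)
    (hxy : x % p = y % p) : T x = T y := by
  have hsub : (x - l) % p = (y - l) % p := by
    have h1 : (x - l) + l ≡ (y - l) + l [MOD p] := by
      show ((x - l) + l) % p = ((y - l) + l) % p
      have e1 : (x - l) + l = x := by omega
      have e2 : (y - l) + l = y := by omega
      rw [e1, e2]; exact hxy
    exact Nat.ModEq.add_right_cancel' l h1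
  rw [run_rep T hp hPer x hx1 hx2, run_rep T hp hPer y hy1 hy2, hsub]

/-- rotations of the root of a run with minimal period `p` are pairwise distinct. -/
lemma rot_inj {l r p : ℕ} (hp : 0 < p) (hlr : l + p ≤ r + 1)
    (hPer : ∀ y, l ≤ y → y + p ≤ r → T y = T (y + p))
    (hminimal : ∀ g, 0 < g → g < p → ¬ (∀ y, l ≤ y → y + g ≤ r → T y = T (y + g)))
    {a b : ℕ} (ha : a < p) (hb : b < p)
    (hab : ∀ t, 1 ≤ t → t ≤ p → rotStr T l p a t = rotStr T l p b t) :
    a = b := by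
  have aux : ∀ a b : ℕ, a < p → b < p → a < b →
      (∀ t, 1 ≤ t → t ≤ p → rotStr T l p a t = rotStr T l p b t) → False := by
    clear hab ha hb a b
    intro a b ha hb hlt hab
    set e := b - a with hedef
    have he : 0 < e := by omega
    have hep : e < p := by omega
    -- Step A : shift invariance by e
    have hshift : ∀ u, T (l + u % p) = T (l + (u + e) % p) := by
      intro u
      set t₀ := (u + (p - a)) % p with ht₀
      have ht₀p : t₀ < p := Nat.mod_lt _ hp
      have h := hab (t₀ + 1) (by omega) (by omega)
      have hx1 : rotStr T l p a (t₀ + 1) = T (l + u % p) := by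
        show T (l + (t₀ + 1 - 1 + a) % p) = T (l + u % p)
        have e1 : t₀ + 1 - 1 + a = t₀ + a := by omega
        rw [e1]
        have e2 : (t₀ + a) % p = u % p := by
          have : (t₀ + a) % p = ((u + (p - a)) + a) % p := by
            rw [ht₀, Nat.mod_add_mod]
          rw [this]
          have e3 : (u + (p - a)) + a = u + p := by omega
          rw [e3, Nat.add_mod_right]
        rw [e2]
      have hx2 : rotStr T l p b (t₀ + 1) = T (l + (u + e) % p) := by
        show T (l + (t₀ + 1 - 1 + b) % p) = T (l + (u + e) % p)
        have e1 : t₀ + 1 - 1 + b = t₀ + b := by omega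
        rw [e1]
        have e2 : (t₀ + b) % p = (u + e) % p := by
          have : (t₀ + b) % p = ((u + (p - a)) + b) % p := by
            rw [ht₀, Nat.mod_add_mod]
          rw [this]
          have e3 : (u + (p - a)) + b = (u + e) + p := by omega
          rw [e3, Nat.add_mod_right]
        rw [e2]
      rw [← hx1, ← hx2]
      exact h
    -- Step B : shift invariance by k*e
    have hshiftk : ∀ k u, T (l + u % p) = T (l + (u + k * e) % p) := by
      intro k
      induction k with
      | zero => intro u; simp
      | succ m ih =>
        intro u
        have h1 := ih u
        have h2 := hshift (u + m * e)
        have e1 : u + m * e + e = u + (m + 1) * e := by ring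
        rw [e1] at h2
        rw [h1, h2]
    -- Step C : shift invariance by gcd
    set g := Nat.gcd e p with hgdef
    obtain ⟨k, hk⟩ := exists_mul_mod_gcd e p hp
    have hshiftg : ∀ u, T (l + u % p) = T (l + (u + g) % p) := by
      intro u
      have h1 := hshiftk k u
      have h2 : (u + k * e) % p = (u + g) % p := by
        rw [Nat.add_mod u (k * e), hk, ← Nat.add_mod]
      rw [h1, h2]
    -- Step D : g is a period, contradiction
    have hg0 : 0 < g := Nat.gcd_pos_of_pos_right e hp
    have hgp : g < p := lt_of_le_of_lt (Nat.le_of_dvd he (Nat.gcd_dvd_left e p)) hep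
    refine hminimal g hg0 hgp ?_
    intro y hy1 hy2
    have r1 : T y = T (l + (y - l) % p) := run_rep T hp hPer y hy1 (by omega)
    have r2 : T (y + g) = T (l + (y + g - l) % p) := run_rep T hp hPer (y + g) (by omega) hy2
    have e1 : y + g - l = (y - l) + g := by omega
    rw [r1, r2, e1, ← hshiftg]
  rcases lt_trichotomy a b with h | h | h
  · exact absurd (aux a b ha hb h hab) (by simp)
  · exact h
  · exact absurd (aux b a hb ha h (fun t h1 h2 => (hab t h1 h2).symm)) (by simp)


/-- characterization of the occurrence set. -/
lemma occ_char {l r p s : ℕ} (hp : 0 < p) (hlr : l + p ≤ r + 1)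
    (hsub : subPer T l r = p)
    (hPer : ∀ y, l ≤ y → y + p ≤ r → T y = T (y + p))
    (hminimal : ∀ g, 0 < g → g < p → ¬ (∀ y, l ≤ y → y + g ≤ r → T y = T (y + g)))
    (hs : s < p) :
    occSet T l r s = {q | l ≤ q ∧ q + p ≤ r + 1 ∧ q % p = (l + s) % p} := by
  ext q
  simp only [occSet, hsub, Set.mem_setOf_eq]
  constructor
  · rintro ⟨h1, h2, h3⟩
    refine ⟨h1, h2, ?_⟩
    set s'' := (q - l) % p with hs''def
    have hs''p : s'' < p := Nat.mod_lt _ hp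
    have heq : ∀ t, 1 ≤ t → t ≤ p → rotStr T l p s'' t = rotStr T l p s t := by
      intro t ht1 htp
      have hTq : T (q + t - 1) = rotStr T l p s'' t := by
        show T (q + t - 1) = T (l + (t - 1 + s'') % p)
        apply run_mod T hp hPer (by omega) (by omega) (by omega)
          (by
            have : (t - 1 + s'') % p < p := Nat.mod_lt _ hp
            omega)
        -- (q + t - 1) % p = (l + (t - 1 + s'') % p) % p
        have e1 : (l + (t - 1 + s'') % p) % p = (l + (t - 1 + s'')) % p :=
          Nat.add_mod_mod ..
        have e2 : (l + (t - 1 + s'')) % p = (l + (t - 1 + (q - l))) % p := by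
          rw [hs''def]
          have a1 : l + (t - 1 + (q - l) % p) = (l + (t-1)) + (q - l) % p := by omega
          have a2 : l + (t - 1 + (q - l)) = (l + (t-1)) + (q - l) := by omega
          rw [a1, a2, Nat.add_mod_mod]
        have e3 : l + (t - 1 + (q - l)) = q + t - 1 := by omega
        rw [e1, e2, e3]
      rw [← hTq]
      exact h3 t ht1 htp
    have : s'' = s := rot_inj T hp hlr hPer hminimal hs''p hs heq
    -- q % p = (l + s) % p
    have e4 : q % p = (l + (q - l)) % p := by
      have : l + (q - l) = q := by omega
      rw [this]
    rw [e4, ← this, hs''def]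
    have a2 : l + (q - l) % p = l + ((q-l) % p) := rfl
    rw [Nat.add_mod_mod]
  · rintro ⟨h1, h2, h3⟩
    refine ⟨h1, h2, ?_⟩
    intro t ht1 htp
    show T (q + t - 1) = T (l + (t - 1 + s) % p)
    apply run_mod T hp hPer (by omega) (by omega) (by omega)
      (by
        have : (t - 1 + s) % p < p := Nat.mod_lt _ hp
        omega)
    have e1 : (l + (t - 1 + s) % p) % p = (l + (t - 1 + s)) % p := Nat.add_mod_mod ..
    have e2 : (q + t - 1) % p = ((l + s) + (t - 1)) % p := by
      have a1 : q + t - 1 = q + (t - 1) := by omega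
      rw [a1, Nat.add_mod q (t-1), h3, ← Nat.add_mod]
    have e3 : (l + s) + (t - 1) = l + (t - 1 + s) := by omega
    rw [e1, e2, e3]


/-- Main anchoring tool: given a τ-run `[l,r]` with period `p`, a base point `i` inside the
run, and a rotation index `σ` that is lex-minimal for the rotations based at `i`,
produce elements of `anchorB`. -/
lemma anchor_core {N τ p l r i σ : ℕ}
    (hp : 0 < p) (hσ : σ < p)
    (hrun : IsTauRun T N τ l r)
    (hsub : subPer T l r = p)
    (hli : l ≤ i) (hir : i + p ≤ r + 1)
    (hminσ : ∀ σ', σ' < p → LexLE (rotStr T i p σ) (rotStr T i p σ') p) :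
    (i - l < p → i + σ ∈ anchorB T N τ) ∧
    (∀ e, r = i + e → 2 * p + σ ≤ e + 1 →
      i + (σ + p * ((e + 1 - p - σ) / p)) ∈ anchorB T N τ) := by
  have hrun' := hrun
  obtain ⟨⟨hl1, hlr0, hrN, hlen, _, _⟩, _, _⟩ := hrun
  rw [hsub] at hlen
  have hlr : l + p ≤ r + 1 := by omega
  have hlr2 : l + 2 * p ≤ r + 1 := by omega
  -- period p holds on [l, r]
  have hPer : ∀ y, l ≤ y → y + p ≤ r → T y = T (y + p) := by
    have hper := minPer_isPeriod (fun t => T (l + t - 1)) (n := r - l + 1) (by omega)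
    rw [show minPer (fun t => T (l + t - 1)) (r - l + 1) = subPer T l r from rfl, hsub] at hper
    obtain ⟨_, _, h3⟩ := hper
    intro y hy1 hy2
    have := h3 (y - l + 1) (by omega) (by omega)
    have e1 : l + (y - l + 1) - 1 = y := by omega
    have e2 : l + (y - l + 1 + p) - 1 = y + p := by omega
    have this2 : T (l + (y - l + 1) - 1) = T (l + (y - l + 1 + p) - 1) := this
    rw [e1, e2] at this2
    exact this2
  -- minimality of p on [l, r]
  have hminimal : ∀ g, 0 < g → g < p → ¬ (∀ y, l ≤ y → y + g ≤ r → T y = T (y + g)) := by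
    intro g hg0 hgp hcon
    have : IsPeriod (fun t => T (l + t - 1)) (r - l + 1) g := by
      refine ⟨hg0, by omega, ?_⟩
      intro i' hi1 hi2
      have := hcon (l + i' - 1) (by omega) (by omega)
      have e1 : l + i' - 1 + g = l + (i' + g) - 1 := by omega
      rw [e1] at this
      exact this
    have := minPer_le _ this
    rw [show minPer (fun t => T (l + t - 1)) (r - l + 1) = subPer T l r from rfl, hsub] at this
    omega
  set c := (i - l) % p with hcdef
  have hcp : c < p := Nat.mod_lt _ hp
  set s := (σ + c) % p with hsdef
  have hs : s < p := Nat.mod_lt _ hp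
  -- base change between rotations at l and rotations at i
  have hbase : ∀ s' t, s' < p → rotStr T l p s' t = rotStr T i p ((s' + (p - c)) % p) t := by
    intro s' t hs'
    show T (l + (t - 1 + s') % p) = T (i + (t - 1 + ((s' + (p - c)) % p)) % p)
    apply run_mod T hp hPer (by omega)
      (by have : (t - 1 + s') % p < p := Nat.mod_lt _ hp; omega)
      (by omega)
      (by have : (t - 1 + ((s' + (p - c)) % p)) % p < p := Nat.mod_lt _ hp; omega)
    have e1 : (l + (t - 1 + s') % p) % p = (l + (t - 1 + s')) % p := Nat.add_mod_mod ..
    have e2 : (i + (t - 1 + ((s' + (p - c)) % p)) % p) % p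
        = (i + (t - 1 + (s' + (p - c)))) % p := by
      rw [Nat.add_mod_mod]
      have a1 : i + (t - 1 + (s' + (p - c)) % p) = (i + (t - 1)) + (s' + (p - c)) % p := by omega
      have a2 : i + (t - 1 + (s' + (p - c))) = (i + (t - 1)) + (s' + (p - c)) := by omega
      rw [a1, a2, Nat.add_mod_mod]
    rw [e1, e2]
    -- l + (t-1+s') ≡ i + (t-1+s'+(p-c))  [MOD p]
    have hic : i % p = (l + c) % p := by
      rw [hcdef]
      have a1 : l + (i - l) % p = l + ((i - l) % p) := rfl
      rw [Nat.add_mod_mod]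
      have : l + (i - l) = i := by omega
      rw [this]
    have key : (i + (t - 1 + (s' + (p - c)))) % p = ((l + c) + (t - 1 + (s' + (p - c)))) % p := by
      rw [Nat.add_mod i, hic, ← Nat.add_mod]
    rw [key]
    have e3 : (l + c) + (t - 1 + (s' + (p - c))) = (l + (t - 1 + s')) + p := by omega
    rw [e3, Nat.add_mod_right]
  -- the chosen rotation at l equals the σ-rotation at i
  have hsσ : (s + (p - c)) % p = σ := by
    rw [hsdef, Nat.mod_add_mod]
    have e1 : σ + c + (p - c) = σ + p := by omega
    rw [e1, Nat.add_mod_right, Nat.mod_eq_of_lt hσ]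
  have hrotW : ∀ t, rotStr T l p s t = rotStr T i p σ t := by
    intro t
    rw [hbase s t hs, hsσ]
  -- lex-minimality of the rotation s at base l
  have hminB : ∀ s', s' < p → LexLE (rotStr T l p s) (rotStr T l p s') p := by
    intro s' hs'
    have h := hminσ ((s' + (p - c)) % p) (Nat.mod_lt _ hp)
    exact lexLE_congr (fun t _ _ => (hrotW t).symm) (fun t _ _ => (hbase s' t hs').symm) h
  have hocc := occ_char T hp hlr hsub hPer hminimal hs
  have hls_mod : (l + s) % p = (i + σ) % p := by
    rw [hsdef]
    have a1 : (l + (σ + c) % p) % p = (l + (σ + c)) % p := Nat.add_mod_mod ..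
    rw [a1]
    have hic : i % p = (l + c) % p := by
      have : l + (i - l) = i := by omega
      rw [← this, Nat.add_mod_mod]
    rw [Nat.add_mod i σ, hic, ← Nat.add_mod]
    congr 1
    omega
  constructor
  · -- sInf version
    intro hkp
    have hceq : c = i - l := by rw [hcdef, Nat.mod_eq_of_lt hkp]
    have hleast : IsLeast (occSet T l r s) (l + s) := by
      constructor
      · rw [hocc]
        exact ⟨by omega, by omega, rfl⟩
      · intro q hq
        rw [hocc] at hq
        obtain ⟨h1, h2, h3⟩ := hq
        by_contra hlt
        push_neg at hlt
        rcases mod_resolve hp (a := l + s) (b := q) h3.symm (by omega) (by omega) with h | h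
        · omega
        · omega
    have hinf : sInf (occSet T l r s) = l + s := hleast.csInf_eq
    have hres : i + σ = l + s ∨ i + σ = l + s + p := by
      apply mod_resolve hp hls_mod.symm (by omega) (by omega)
    show i + σ ∈ anchorB T N τ
    refine ⟨l, r, hrun', s, ?_, ?_, ?_⟩
    · rw [hsub]; exact hs
    · rw [hsub]; exact hminB
    · rw [hinf, hsub]
      rcases hres with h | h
      · exact Or.inl h
      · exact Or.inr (Or.inl h)
  · -- sSup version
    intro e hre h2pσ
    set D := e + 1 - p - σ with hDdef
    set K := D / p with hKdef
    have hKD : p * K ≤ D := by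
      rw [hKdef, mul_comm]
      exact Nat.div_mul_le_self D p
    set h := σ + p * K with hhdef
    have hhe : h + p ≤ e + 1 := by omega
    have hgreat : IsGreatest (occSet T l r s) (i + h) := by
      constructor
      · rw [hocc]
        refine ⟨by omega, by omega, ?_⟩
        have a1 : (i + h) % p = (i + σ) % p := by
          rw [hhdef]
          have : i + (σ + p * K) = (i + σ) + p * K := by omega
          rw [this, Nat.add_mul_mod_self_left]
        rw [a1, hls_mod]
      · intro q hq
        rw [hocc] at hq
        obtain ⟨h1, h2, h3⟩ := hq
        by_contra hgt
        push_neg at hgt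
        have hqiσ : i + σ < q := by omega
        have hmodq : q % p = (i + σ) % p := by rw [h3, hls_mod]
        have hdvd : p ∣ q - (i + σ) := (Nat.modEq_iff_dvd' (by omega)).mp hmodq.symm
        obtain ⟨c', hc'⟩ := hdvd
        have hc'K : c' ≤ K := by
          have hpc : p * c' ≤ D := by omega
          rw [hKdef, Nat.le_div_iff_mul_le hp, mul_comm]
          exact hpc
        have : q ≤ i + h := by
          have : p * c' ≤ p * K := Nat.mul_le_mul_left p hc'K
          omega
        omega
    have hsup : sSup (occSet T l r s) = i + h := hgreat.csSup_eq
    show i + h ∈ anchorB T N τ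
    refine ⟨l, r, hrun', s, ?_, ?_, ?_⟩
    · rw [hsub]; exact hs
    · rw [hsub]; exact hminB
    · rw [hsup]
      exact Or.inr (Or.inr rfl)


/-- Construction of the maximal run containing the `p`-periodic window `[i, i+3τ-2]`. -/
lemma build_run {N τ p i : ℕ}
    (hτ : 33 ≤ τ) (hp1 : 0 < p) (hpτ : p ≤ τ / 3)
    (hi1 : 1 ≤ i) (hiN : i + 3 * τ - 2 ≤ N)
    (hsubw : subPer T i (i + 3 * τ - 2) = p) :
    ∃ k e : ℕ,
      k ≤ i - 1 ∧ 3 * τ - 2 ≤ e ∧ e ≤ N - i ∧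
      IsTauRun T N τ (i - k) (i + e) ∧
      subPer T (i - k) (i + e) = p ∧
      (∀ y, i - k ≤ y → y + p ≤ i + e → T y = T (y + p)) ∧
      (∀ e', e' ≤ N - i → (∀ y, i ≤ y → y + p ≤ i + e' → T y = T (y + p)) → e' ≤ e) ∧
      (e < N - i → T (i + e + 1 - p) ≠ T (i + e + 1)) := by
  classical
  have hp3 : 3 * p ≤ τ := by
    have := (Nat.le_div_iff_mul_le (by norm_num : 0 < 3)).mp hpτ
    omega
  -- window period facts
  have hwlen : (i + 3 * τ - 2) - i + 1 = 3 * τ - 1 := by omega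
  have hPw : ∀ y, i ≤ y → y + p ≤ i + 3 * τ - 2 → T y = T (y + p) := by
    have hper := minPer_isPeriod (fun t => T (i + t - 1)) (n := (i + 3 * τ - 2) - i + 1) (by omega)
    rw [show minPer (fun t => T (i + t - 1)) ((i + 3 * τ - 2) - i + 1)
        = subPer T i (i + 3 * τ - 2) from rfl, hsubw] at hper
    obtain ⟨_, _, h3⟩ := hper
    intro y hy1 hy2
    have h := h3 (y - i + 1) (by omega) (by omega)
    have h2 : T (i + (y - i + 1) - 1) = T (i + (y - i + 1 + p) - 1) := h
    have e1 : i + (y - i + 1) - 1 = y := by omega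
    have e2 : i + (y - i + 1 + p) - 1 = y + p := by omega
    rw [e1, e2] at h2
    exact h2
  have hMw : ∀ g, 0 < g → g < p → ¬ (∀ y, i ≤ y → y + g ≤ i + 3 * τ - 2 → T y = T (y + g)) := by
    intro g hg0 hgp hcon
    have hgP : IsPeriod (fun t => T (i + t - 1)) ((i + 3 * τ - 2) - i + 1) g := by
      refine ⟨hg0, by omega, ?_⟩
      intro i' hi' hi'2
      have h := hcon (i + i' - 1) (by omega) (by omega)
      have e1 : i + i' - 1 + g = i + (i' + g) - 1 := by omega
      rw [e1] at h
      exact h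
    have := minPer_le _ hgP
    rw [show minPer (fun t => T (i + t - 1)) ((i + 3 * τ - 2) - i + 1)
        = subPer T i (i + 3 * τ - 2) from rfl, hsubw] at this
    omega
  set Pl : ℕ → Prop := fun k => ∀ y, i - k ≤ y → y ≤ i - 1 → T y = T (y + p) with hPl
  set Pr : ℕ → Prop := fun e => ∀ y, i ≤ y → y + p ≤ i + e → T y = T (y + p) with hPr
  set k := Nat.findGreatest Pl (i - 1) with hkdef
  set e := Nat.findGreatest Pr (N - i) with hedef
  have hk_le : k ≤ i - 1 := Nat.findGreatest_le _
  have he_le : e ≤ N - i := Nat.findGreatest_le _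
  have hPl0 : Pl 0 := by intro y h1 h2; omega
  have hPlk : Pl k := Nat.findGreatest_spec (Nat.zero_le _) hPl0
  have hPr_win : Pr (3 * τ - 2) := by
    intro y h1 h2
    exact hPw y h1 (by omega)
  have he_ge : 3 * τ - 2 ≤ e := Nat.le_findGreatest (by omega) hPr_win
  have hPre : Pr e := Nat.findGreatest_spec (m := 3 * τ - 2) (by omega) hPr_win
  -- the combined periodicity of the run
  have hPer : ∀ y, i - k ≤ y → y + p ≤ i + e → T y = T (y + p) := by
    intro y h1 h2
    rcases le_or_gt i y with h | h
    · exact hPre y h h2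
    · exact hPlk y h1 (by omega)
  have hemax : ∀ e', e' ≤ N - i → Pr e' → e' ≤ e := fun e' h1 h2 => Nat.le_findGreatest h1 h2
  have hbreak : e < N - i → T (i + e + 1 - p) ≠ T (i + e + 1) := by
    intro hlt
    have hnot : ¬ (∀ y, i ≤ y → y + p ≤ i + (e + 1) → T y = T (y + p)) := by
      have h : ¬ Pr (e + 1) := Nat.findGreatest_is_greatest
        (show Nat.findGreatest Pr (N - i) < e + 1 by omega)
        (show e + 1 ≤ N - i by omega)
      simpa [hPr] using h
    push_neg at hnot
    obtain ⟨y, hy1, hy2, hy3⟩ := hnot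
    have hy4 : y + p = i + e + 1 := by
      by_contra hne
      exact hy3 (hPre y hy1 (by omega))
    have : y = i + e + 1 - p := by omega
    rw [this] at hy3
    intro hcon
    exact hy3 (by rw [show i + e + 1 - p + p = i + e + 1 by omega]; exact hcon)
  -- subPer of the run equals p
  have hsubrun : subPer T (i - k) (i + e) = p := by
    have hrlen : (i + e) - (i - k) + 1 = e + k + 1 := by omega
    have hPp : IsPeriod (fun t => T ((i - k) + t - 1)) ((i + e) - (i - k) + 1) p := by
      refine ⟨hp1, by omega, ?_⟩
      intro i' h1 h2
      have h := hPer ((i - k) + i' - 1) (by omega) (by omega)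
      have e1 : (i - k) + i' - 1 + p = (i - k) + (i' + p) - 1 := by omega
      rw [e1] at h
      exact h
    have hle : subPer T (i - k) (i + e) ≤ p := minPer_le _ hPp
    rcases lt_or_ge (subPer T (i - k) (i + e)) p with hlt | hge
    · exfalso
      set p' := subPer T (i - k) (i + e) with hp'def
      have hp'mem : IsPeriod (fun t => T ((i - k) + t - 1)) ((i + e) - (i - k) + 1) p' :=
        minPer_isPeriod _ (by omega)
      obtain ⟨hp'1, hp'2, hp'3⟩ := hp'mem
      refine hMw p' hp'1 hlt ?_
      intro y h1 h2
      have h := hp'3 (y - (i - k) + 1) (by omega) (by omega)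
      have h2' : T ((i - k) + (y - (i - k) + 1) - 1)
          = T ((i - k) + (y - (i - k) + 1 + p') - 1) := h
      have e1 : (i - k) + (y - (i - k) + 1) - 1 = y := by omega
      have e2 : (i - k) + (y - (i - k) + 1 + p') - 1 = y + p' := by omega
      rw [e1, e2] at h2'
      exact h2'
    · omega
  -- IsRun
  have hrun : IsRun T N (i - k) (i + e) := by
    refine ⟨by omega, by omega, by omega, by rw [hsubrun]; omega, ?_, ?_⟩
    · rcases Nat.eq_or_lt_of_le hk_le with hkk | hkk
      · left; omega
      · right
        rw [hsubrun]
        have hnot : ¬ (∀ y, i - (k + 1) ≤ y → y ≤ i - 1 → T y = T (y + p)) := by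
          have h : ¬ Pl (k + 1) := Nat.findGreatest_is_greatest
            (show Nat.findGreatest Pl (i - 1) < k + 1 by omega)
            (show k + 1 ≤ i - 1 by omega)
          simpa [hPl] using h
        push_neg at hnot
        obtain ⟨y, hy1, hy2, hy3⟩ := hnot
        have hy4 : y = i - k - 1 := by
          by_contra hne
          exact hy3 (hPlk y (by omega) hy2)
        rw [hy4] at hy3
        exact hy3
    · rcases Nat.eq_or_lt_of_le he_le with hee | hee
      · left; omega
      · right
        rw [hsubrun]
        exact fun hcon => (hbreak hee) hcon.symm
  have htau : IsTauRun T N τ (i - k) (i + e) := by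
    refine ⟨hrun, by omega, by rw [hsubrun]; exact hpτ⟩
  exact ⟨k, e, hk_le, he_ge, he_le, htau, hsubrun, hPer, hemax, hbreak⟩

end RunTheory


/-- **Anchoring lemma.**  Let `T = S₁ $ S₂` (with `$` a symbol occurring in neither string),
`N = |T|`, `d ≥ 100`, `τ = ⌊d/3⌋`, and let `A` be any `τ`-synchronizing set of `T`.
If `S₁[i₁ .. i₁+d-1] = S₂[i₂ .. i₂+d-1]` is a length-`d` common substring minimizing
`i₁ + i₂`, then it is anchored by `A ∪ B`: there is a shift `h ∈ [0 .. d-1]` with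
`i₁ + h ∈ A ∪ B` and `|S₁| + 1 + i₂ + h ∈ A ∪ B`. -/
theorem lcs_anchoring {β : Type*} [LinearOrder β]
    (S₁ S₂ : ℕ → β) (n₁ n₂ : ℕ) (dollar : β)
    (hS₁ : ∀ i, 1 ≤ i → i ≤ n₁ → S₁ i ≠ dollar)
    (hS₂ : ∀ i, 1 ≤ i → i ≤ n₂ → S₂ i ≠ dollar)
    (T : ℕ → β) (N : ℕ) (hN : N = n₁ + 1 + n₂)
    (hT₁ : ∀ i, 1 ≤ i → i ≤ n₁ → T i = S₁ i)
    (hTd : T (n₁ + 1) = dollar)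
    (hT₂ : ∀ i, 1 ≤ i → i ≤ n₂ → T (n₁ + 1 + i) = S₂ i)
    (d τ : ℕ) (hd : 100 ≤ d) (hτ : τ = d / 3)
    (A : Set ℕ) (hA : IsSyncSet T N τ A)
    (i₁ i₂ : ℕ)
    (hi₁ : 1 ≤ i₁ ∧ i₁ + d ≤ n₁ + 1) (hi₂ : 1 ≤ i₂ ∧ i₂ + d ≤ n₂ + 1)
    (hcommon : ∀ t, 1 ≤ t → t ≤ d → S₁ (i₁ + t - 1) = S₂ (i₂ + t - 1))
    (hmin : ∀ i₁' i₂', 1 ≤ i₁' → i₁' + d ≤ n₁ + 1 → 1 ≤ i₂' → i₂' + d ≤ n₂ + 1 →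
      (∀ t, 1 ≤ t → t ≤ d → S₁ (i₁' + t - 1) = S₂ (i₂' + t - 1)) →
      i₁ + i₂ ≤ i₁' + i₂') :
    ∃ h, h < d ∧ i₁ + h ∈ A ∪ anchorB T N τ ∧
      n₁ + 1 + i₂ + h ∈ A ∪ anchorB T N τ := by
  obtain ⟨hi11, hi12⟩ := hi₁
  obtain ⟨hi21, hi22⟩ := hi₂
  set j := n₁ + 1 + i₂ with hjdef
  have hτ33 : 33 ≤ τ := by omega
  have h3τ : 3 * τ ≤ d := by omega
  -- window equality
  have hW : ∀ m, m < d → T (i₁ + m) = T (j + m) := by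
    intro m hm
    have h1 : T (i₁ + m) = S₁ (i₁ + m) := hT₁ _ (by omega) (by omega)
    have h2 : T (j + m) = S₂ (i₂ + m) := by
      have h := hT₂ (i₂ + m) (by omega) (by omega)
      rw [show n₁ + 1 + (i₂ + m) = j + m by omega] at h
      exact h
    have h3 := hcommon (m + 1) (by omega) (by omega)
    rw [show i₁ + (m + 1) - 1 = i₁ + m by omega,
        show i₂ + (m + 1) - 1 = i₂ + m by omega] at h3
    rw [h1, h2, h3]
  set p := subPer T i₁ (i₁ + 3 * τ - 2) with hpdef
  have hp1 : 1 ≤ p :=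
    (minPer_isPeriod (fun t => T (i₁ + t - 1)) (n := (i₁ + 3 * τ - 2) - i₁ + 1) (by omega)).1
  have hsubeq : subPer T j (j + 3 * τ - 2) = p := by
    rw [hpdef]
    show minPer (fun t => T (j + t - 1)) ((j + 3 * τ - 2) - j + 1)
       = minPer (fun t => T (i₁ + t - 1)) ((i₁ + 3 * τ - 2) - i₁ + 1)
    rw [show (j + 3 * τ - 2) - j + 1 = 3 * τ - 1 by omega,
        show (i₁ + 3 * τ - 2) - i₁ + 1 = 3 * τ - 1 by omega]
    apply minPer_congr
    intro t ht1 ht2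
    have h := hW (t - 1) (by omega)
    rw [show j + t - 1 = j + (t - 1) by omega, show i₁ + t - 1 = i₁ + (t - 1) by omega]
    exact h.symm
  by_cases hper : p ≤ τ / 3
  swap
  · -- CASE A : non-periodic window, use the synchronizing set
    obtain ⟨hA1, hA2, hA3⟩ := hA
    have hd1 := hA3 i₁ (by omega) (by omega)
    have hne : A ∩ Set.Icc i₁ (i₁ + τ - 1) ≠ ∅ := fun hempty => hper (hd1.mp hempty)
    obtain ⟨a, ha⟩ := Set.nonempty_iff_ne_empty.mpr hne
    obtain ⟨haA, ha1, ha2⟩ : a ∈ A ∧ i₁ ≤ a ∧ a ≤ i₁ + τ - 1 := ⟨ha.1, ha.2.1, ha.2.2⟩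
    refine ⟨a - i₁, by omega, ?_, ?_⟩
    · left
      rw [show i₁ + (a - i₁) = a by omega]
      exact haA
    · left
      have hcons := hA2 a (j + (a - i₁)) (by omega) (by omega) (by omega) (by omega) ?_
      · exact hcons.mp haA
      · intro t ht1 ht2
        have h := hW ((a - i₁) + (t - 1)) (by omega)
        rw [show i₁ + ((a - i₁) + (t - 1)) = a + t - 1 by omega,
            show j + ((a - i₁) + (t - 1)) = j + (a - i₁) + t - 1 by omega] at h
        exact h
  · -- CASE B : periodic window, use runs and Lyndon roots
    have hp3 : 3 * p ≤ τ := by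
      have := (Nat.le_div_iff_mul_le (by norm_num : 0 < 3)).mp hper
      omega
    -- build both runs
    obtain ⟨k₁, e₁, hk₁le, he₁ge, he₁le, htau₁, hsub₁, hPer₁, hemax₁, hbreak₁⟩ :=
      build_run T (N := N) hτ33 hp1 hper hi11 (by omega) hpdef.symm
    obtain ⟨k₂, e₂, hk₂le, he₂ge, he₂le, htau₂, hsub₂, hPer₂, hemax₂, hbreak₂⟩ :=
      build_run T (N := N) hτ33 hp1 hper (by omega : 1 ≤ j) (by omega) hsubeq
    -- the lexicographically minimal rotation, based at i₁
    obtain ⟨σ, hσp, hσmin⟩ := exists_lexLE_min (rotStr T i₁ p) p p (by omega)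
    have hσmin₂ : ∀ σ', σ' < p → LexLE (rotStr T j p σ) (rotStr T j p σ') p := by
      intro σ' hσ'
      refine lexLE_congr ?_ ?_ (hσmin σ' hσ')
      · intro t _ _
        show T (i₁ + (t - 1 + σ) % p) = T (j + (t - 1 + σ) % p)
        exact hW _ (by have := Nat.mod_lt (t - 1 + σ) (show 0 < p by omega); omega)
      · intro t _ _
        show T (i₁ + (t - 1 + σ') % p) = T (j + (t - 1 + σ') % p)
        exact hW _ (by have := Nat.mod_lt (t - 1 + σ') (show 0 < p by omega); omega)
    by_cases hcase : e₁ ≤ d - 2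
    · -- CASE B1 : the periodicity breaks inside the window on the right
      have he₂e₁ : e₂ = e₁ := by
        have hge : e₁ ≤ e₂ := by
          apply hemax₂ e₁ (by omega)
          intro y hy1 hy2
          have hu1 : T (j + (y - j)) = T (i₁ + (y - j)) := (hW (y - j) (by omega)).symm
          have hu2 : T (j + (y - j + p)) = T (i₁ + (y - j + p)) := (hW (y - j + p) (by omega)).symm
          have hu3 : T (i₁ + (y - j)) = T (i₁ + (y - j) + p) :=
            hPer₁ (i₁ + (y - j)) (by omega) (by omega)
          rw [show y = j + (y - j) by omega, show j + (y - j) + p = j + (y - j + p) by omega,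
            hu1, hu2, show i₁ + (y - j + p) = i₁ + (y - j) + p by omega]
          exact hu3
        have hle : e₂ ≤ e₁ := by
          by_contra hgt
          push_neg at hgt
          have hy := hPer₂ (j + e₁ + 1 - p) (by omega) (by omega)
          rw [show j + e₁ + 1 - p + p = j + e₁ + 1 by omega] at hy
          have h1 : T (j + e₁ + 1 - p) = T (i₁ + (e₁ + 1 - p)) := by
            rw [show j + e₁ + 1 - p = j + (e₁ + 1 - p) by omega]
            exact (hW (e₁ + 1 - p) (by omega)).symm
          have h2 : T (j + e₁ + 1) = T (i₁ + (e₁ + 1)) := by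
            rw [show j + e₁ + 1 = j + (e₁ + 1) by omega]
            exact (hW (e₁ + 1) (by omega)).symm
          apply hbreak₁ (by omega)
          rw [show i₁ + e₁ + 1 - p = i₁ + (e₁ + 1 - p) by omega,
              show i₁ + e₁ + 1 = i₁ + (e₁ + 1) by omega]
          rw [← h1, ← h2]
          exact hy
        omega
      set hval := σ + p * ((e₁ + 1 - p - σ) / p) with hvaldef
      have hvle : p * ((e₁ + 1 - p - σ) / p) ≤ e₁ + 1 - p - σ := Nat.mul_div_le _ _
      refine ⟨hval, by omega, ?_, ?_⟩
      · right
        exact (anchor_core T (show 0 < p by omega) hσp htau₁ hsub₁ (by omega) (by omega)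
          hσmin).2 e₁ rfl (by omega)
      · right
        have h := (anchor_core T (show 0 < p by omega) hσp htau₂ hsub₂ (by omega) (by omega)
          hσmin₂).2 e₂ rfl (by omega)
        rw [he₂e₁] at h
        exact h
    · -- CASE B2 : the whole window is p-periodic; runs extend little to the left
      push_neg at hcase
      have he₁d : d - 1 ≤ e₁ := by omega
      have he₂d : d - 1 ≤ e₂ := by
        apply hemax₂ (d - 1) (by omega)
        intro y hy1 hy2
        have hu1 : T (j + (y - j)) = T (i₁ + (y - j)) := (hW (y - j) (by omega)).symm
        have hu2 : T (j + (y - j + p)) = T (i₁ + (y - j + p)) := (hW (y - j + p) (by omega)).symm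
        have hu3 : T (i₁ + (y - j)) = T (i₁ + (y - j) + p) :=
          hPer₁ (i₁ + (y - j)) (by omega) (by omega)
        rw [show y = j + (y - j) by omega, show j + (y - j) + p = j + (y - j + p) by omega,
          hu1, hu2, show i₁ + (y - j + p) = i₁ + (y - j) + p by omega]
        exact hu3
      -- k₁ < p by minimality of i₁ + i₂
      have hk₁p : k₁ < p := by
        by_contra hge
        push_neg at hge
        have hocc : ∀ t, 1 ≤ t → t ≤ d → S₁ (i₁ - p + t - 1) = S₂ (i₂ + t - 1) := by
          intro t ht1 ht2
          have h1 : S₁ (i₁ - p + t - 1) = T (i₁ - p + t - 1) :=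
            (hT₁ _ (by omega) (by omega)).symm
          have h2 : T (i₁ - p + t - 1) = T (i₁ + t - 1) := by
            have h := hPer₁ (i₁ - p + t - 1) (by omega) (by omega)
            rw [show i₁ - p + t - 1 + p = i₁ + t - 1 by omega] at h
            exact h
          have h3 : T (i₁ + t - 1) = S₁ (i₁ + t - 1) := hT₁ _ (by omega) (by omega)
          rw [h1, h2, h3]
          exact hcommon t ht1 ht2
        have := hmin (i₁ - p) i₂ (by omega) (by omega) hi21 hi22 hocc
        omega
      -- k₂ < p by minimality and the dollar separator
      have hk₂p : k₂ < p := by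
        by_contra hge
        push_neg at hge
        have hi₂p : p < i₂ := by
          by_contra hle
          push_neg at hle
          have h := hPer₂ (n₁ + 1) (by omega) (by omega)
          rw [hTd] at h
          have h2 : T (n₁ + 1 + p) = S₂ p := hT₂ p (by omega) (by omega)
          rw [h2] at h
          exact hS₂ p (by omega) (by omega) h.symm
        have hocc : ∀ t, 1 ≤ t → t ≤ d → S₁ (i₁ + t - 1) = S₂ (i₂ - p + t - 1) := by
          intro t ht1 ht2
          have h1 : S₂ (i₂ - p + t - 1) = T (n₁ + 1 + (i₂ - p + t - 1)) :=
            (hT₂ _ (by omega) (by omega)).symm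
          have h2 : T (n₁ + 1 + (i₂ - p + t - 1)) = T (j + t - 1) := by
            have h := hPer₂ (n₁ + 1 + (i₂ - p + t - 1)) (by omega) (by omega)
            rw [show n₁ + 1 + (i₂ - p + t - 1) + p = j + t - 1 by omega] at h
            exact h
          have h3 : T (j + t - 1) = S₂ (i₂ + t - 1) := by
            have h := hT₂ (i₂ + t - 1) (by omega) (by omega)
            rw [show n₁ + 1 + (i₂ + t - 1) = j + t - 1 by omega] at h
            exact h
          rw [h1, h2, h3]
          exact hcommon t ht1 ht2
        have := hmin i₁ (i₂ - p) hi11 hi12 (by omega) (by omega) hocc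
        omega
      refine ⟨σ, by omega, ?_, ?_⟩
      · right
        exact (anchor_core T (show 0 < p by omega) hσp htau₁ hsub₁ (by omega) (by omega)
          hσmin).1 (by omega)
      · right
        exact (anchor_core T (show 0 < p by omega) hσp htau₂ hsub₂ (by omega) (by omega)
          hσmin₂).1 (by omega)
end
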